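/- arXiv:0807.2707 — 8 statements merged into one kernel-verified Lean document; each statement's English description precedes it below -/
import Mathlib

section
/- No latin trade can be embedded in a torsion-free abelian group. Precisely: if G is a torsion-free abelian group (written additively) and W is a finite nonempty set of triples (r,c,s) with r + c = s such that W is a latin trade (i.e., W admits a disjoint mate B making (W,B) a latin bitrade), then a contradiction follows; equivalently, any finite partial latin square embedded in a torsion-free finitely generated abelian group that forms a connected latin trade must be empty. -/
/-- `P` is a partial latin square: any two of the three coordinates determine the triple. -/
def IsPLS {R C S : Type*} (P : Set (R × C × S)) : Prop :=
  ∀ t₁ ∈ P, ∀ t₂ ∈ P,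
    ((t₁ : R × C × S).1 = t₂.1 ∧ t₁.2.1 = t₂.2.1 → t₁ = t₂) ∧
    (t₁.1 = t₂.1 ∧ t₁.2.2 = t₂.2.2 → t₁ = t₂) ∧
    (t₁.2.1 = t₂.2.1 ∧ t₁.2.2 = t₂.2.2 → t₁ = t₂)

/-- The defining condition of a latin bitrade: for each `(r,c,s) ∈ W` there are unique
`r' ≠ r`, `c' ≠ c`, `s' ≠ s` with `(r',c,s), (r,c',s), (r,c,s') ∈ B`. -/
def BitradeCond {R C S : Type*} (W B : Set (R × C × S)) : Prop :=
  ∀ t ∈ W,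
    (∃! r', r' ≠ (t : R × C × S).1 ∧ (r', t.2.1, t.2.2) ∈ B) ∧
    (∃! c', c' ≠ t.2.1 ∧ (t.1, c', t.2.2) ∈ B) ∧
    (∃! s', s' ≠ t.2.2 ∧ (t.1, t.2.1, s') ∈ B)

/-- `(W,B)` is a latin bitrade. -/
def IsLatinBitrade {R C S : Type*} (W B : Set (R × C × S)) : Prop :=
  W.Nonempty ∧ B.Nonempty ∧ Disjoint W B ∧ IsPLS W ∧ IsPLS B ∧
    BitradeCond W B ∧ BitradeCond B W

lemma exists_max_aux {α β : Type*} [LinearOrder β] (f : α → β) (s : Set α)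
    (h : s.Finite) (hs : s.Nonempty) : ∃ a ∈ s, ∀ b ∈ s, f b ≤ f a := by
  obtain ⟨a, ha, hm⟩ := Set.Finite.exists_maximalFor f s h hs
  exact ⟨a, ha, fun b hb => (le_total (f b) (f a)).elim id (fun hle => (hm hb hle).ge)⟩

/-- No latin trade can be embedded in a torsion-free abelian group: if `G` is a torsion-free
abelian group and `W` is a finite nonempty set of triples `(r,c,s)` of elements of `G` with
`r + c = s` which admits a disjoint mate `B` making `(W,B)` a latin bitrade, then we get a
contradiction. -/
theorem stmt5 {G : Type*} [AddCommGroup G]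
    (htf : ∀ g : G, g ≠ 0 → ∀ n : ℕ, 0 < n → n • g ≠ 0)
    (W : Set (G × G × G)) (hfin : W.Finite) (hne : W.Nonempty)
    (hemb : ∀ t ∈ W, (t : G × G × G).1 + t.2.1 = t.2.2)
    (htrade : ∃ B : Set (G × G × G), IsLatinBitrade W B) :
    False := by
  classical
  obtain ⟨B, _, _, _, _, _, hWB, hBW⟩ := htrade
  -- torsion-free as NoZeroSMulDivisors
  haveI : NoZeroSMulDivisors ℤ G := by
    refine ⟨fun {c g} h => ?_⟩
    by_contra hcon
    push_neg at hcon
    obtain ⟨hc, hg⟩ := hcon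
    have h1 : ((c.natAbs : ℤ)) • g = 0 := by
      rcases Int.natAbs_eq c with he | he
      · rw [← he]; exact h
      · have h3 : ((c.natAbs : ℤ)) = -c := by omega
        rw [h3, neg_smul, h, neg_zero]
    rw [natCast_zsmul] at h1
    exact htf g hg c.natAbs (Int.natAbs_pos.mpr hc) h1
  -- the finitely generated subgroup containing all coordinates
  set E : Set G := ((fun t : G × G × G => t.1) '' W ∪ (fun t : G × G × G => t.2.1) '' W) ∪
      (fun t : G × G × G => t.2.2) '' W with hE
  have hEfin : E.Finite := ((hfin.image _).union (hfin.image _)).union (hfin.image _)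
  set H : Submodule ℤ G := Submodule.span ℤ E with hH
  have hmem : ∀ t : G × G × G, t ∈ W → t.1 ∈ H ∧ t.2.1 ∈ H ∧ t.2.2 ∈ H := by
    intro t ht
    exact ⟨Submodule.subset_span (Or.inl (Or.inl ⟨t, ht, rfl⟩)),
      Submodule.subset_span (Or.inl (Or.inr ⟨t, ht, rfl⟩)),
      Submodule.subset_span (Or.inr ⟨t, ht, rfl⟩)⟩
  haveI : Module.Finite ℤ H := Module.Finite.span_of_finite ℤ hEfin
  haveI : Module.Free ℤ H := Module.free_of_finite_type_torsion_free'
  -- basis and order embedding into Lex (Fin n → ℤ)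
  let n := Fintype.card (Module.Free.ChooseBasisIndex ℤ H)
  let b : Module.Basis (Fin n) ℤ H := (Module.Free.chooseBasis ℤ H).reindex (Fintype.equivFin _)
  let e : H ≃ₗ[ℤ] (Fin n → ℤ) := b.equivFun
  haveI : WellFoundedLT (Fin n) := inferInstance
  haveI : IsOrderedCancelAddMonoid (Lex (Fin n → ℤ)) := inferInstance
  let ψ : G → Lex (Fin n → ℤ) := fun g => if h : g ∈ H then toLex (e ⟨g, h⟩) else 0
  have ψadd : ∀ a b : G, a ∈ H → b ∈ H → ψ (a + b) = ψ a + ψ b := by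
    intro a b ha hb
    have hab : a + b ∈ H := H.add_mem ha hb
    simp only [ψ, dif_pos ha, dif_pos hb, dif_pos hab]
    have h2 : (⟨a + b, hab⟩ : H) = ⟨a, ha⟩ + ⟨b, hb⟩ := rfl
    rw [h2, map_add]
    rfl
  have ψinj : ∀ a b : G, a ∈ H → b ∈ H → ψ a = ψ b → a = b := by
    intro a b ha hb hab
    simp only [ψ, dif_pos ha, dif_pos hb] at hab
    have := e.injective (toLex.injective hab)
    exact Subtype.ext_iff.mp this
  -- pick triple with max symbol, then max row among those
  obtain ⟨t₀, ht₀W, hsym⟩ := exists_max_aux (fun t => ψ t.2.2) W hfin hne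
  set W' : Set (G × G × G) := {t ∈ W | t.2.2 = t₀.2.2} with hW'
  obtain ⟨t₁, ⟨ht₁W, ht₁s⟩, hrow⟩ := exists_max_aux (fun t => ψ t.1) W'
    (hfin.subset (fun t ht => ht.1)) ⟨t₀, ht₀W, rfl⟩
  -- bitrade conditions
  obtain ⟨-, ⟨c', ⟨hc'ne, hc'B⟩, -⟩, -⟩ := hWB t₁ ht₁W
  obtain ⟨⟨r'', ⟨hr''ne, hr''W⟩, -⟩, -, ⟨s'', ⟨hs''ne, hs''W⟩, -⟩⟩ := hBW _ hc'B
  -- embeddings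
  have e1 : t₁.1 + c' = s'' := hemb _ hs''W
  have e2 : r'' + c' = t₁.2.2 := hemb _ hr''W
  have e3 : t₁.1 + t₁.2.1 = t₁.2.2 := hemb _ ht₁W
  -- memberships
  obtain ⟨hm1r, hm1c, hm1s⟩ := hmem _ ht₁W
  obtain ⟨-, hm2c, hm2s⟩ := hmem _ hs''W
  obtain ⟨hm3r, -, -⟩ := hmem _ hr''W
  -- ψ s'' < ψ t₁.2.2
  have hle : ψ s'' ≤ ψ t₁.2.2 := by
    have := hsym _ hs''W
    simpa [ht₁s] using this
  have hne' : ψ s'' ≠ ψ t₁.2.2 := fun h => hs''ne (ψinj _ _ hm2s hm1s h)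
  have hlt : ψ s'' < ψ t₁.2.2 := lt_of_le_of_ne hle hne'
  rw [← e1, ← e3, ψadd _ _ hm1r hm2c, ψadd _ _ hm1r hm1c] at hlt
  have hc : ψ c' < ψ t₁.2.1 := lt_of_add_lt_add_left hlt
  -- ψ t₁.1 < ψ r''
  have heq : ψ r'' + ψ c' = ψ t₁.1 + ψ t₁.2.1 := by
    rw [← ψadd _ _ hm3r hm2c, ← ψadd _ _ hm1r hm1c, e2, e3]
  have hgt : ψ t₁.1 < ψ r'' := by
    have : ψ t₁.1 + ψ t₁.2.1 < ψ r'' + ψ t₁.2.1 := by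
      rw [← heq]; exact add_lt_add_right hc (ψ r'')
    exact lt_of_add_lt_add_right this
  have : ψ r'' ≤ ψ t₁.1 := hrow (r'', c', t₁.2.2) ⟨hr''W, ht₁s⟩
  exact absurd this (not_le.mpr hgt)
end

section
/- For each integer g ≥ 1, let W be the partial latin square consisting of the first three rows of the Cayley table of ℤ_{2g+1} (rows 0,1,2; W = {(i,j,i+j mod (2g+1)) : i ∈ {0,1,2}, j ∈ ℤ_{2g+1}}), and let B be obtained by cyclically shifting the rows (B = {(i,j,(i+1 mod 3)+j mod (2g+1)) : i ∈ {0,1,2}, j ∈ ℤ_{2g+1}}). Then (W,B) is a latin bitrade, it is separated and connected, and its genus, computed by the formula g = (2 + |W| − |R| − |C| − |S|)/2 where R, C, S are the sets of rows, columns and symbols used, equals g. -/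
/-- One step of the row permutation `ψ_r`: symbol `s` maps to `t` if some cell of row `r`
holds `s` in `W` and `t` in `B`. -/
def RowRel {R C S : Type*} (W B : Set (R × C × S)) (r : R) (s t : S) : Prop :=
  ∃ c, (r, c, s) ∈ W ∧ (r, c, t) ∈ B

/-- One step of the column permutation `ψ_c`. -/
def ColRel {R C S : Type*} (W B : Set (R × C × S)) (c : C) (s t : S) : Prop :=
  ∃ r, (r, c, s) ∈ W ∧ (r, c, t) ∈ B

/-- One step of the symbol permutation `ψ_s` (acting on columns). -/
def SymRel {R C S : Type*} (W B : Set (R × C × S)) (s : S) (c c' : C) : Prop :=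
  ∃ r, (r, c, s) ∈ W ∧ (r, c', s) ∈ B

/-- `(W,B)` is separated: for every row, column and symbol, the corresponding permutation is
a single cycle, i.e. any two entries of the row (resp. column, symbol) are connected by
iterating the permutation. -/
def Separated {R C S : Type*} (W B : Set (R × C × S)) : Prop :=
  (∀ (r : R) (s t : S), (∃ c, (r, c, s) ∈ W) → (∃ c, (r, c, t) ∈ W) →
      Relation.ReflTransGen (RowRel W B r) s t) ∧
  (∀ (c : C) (s t : S), (∃ r, (r, c, s) ∈ W) → (∃ r, (r, c, t) ∈ W) →
      Relation.ReflTransGen (ColRel W B c) s t) ∧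
  (∀ (s : S) (c c' : C), (∃ r, (r, c, s) ∈ W) → (∃ r, (r, c', s) ∈ W) →
      Relation.ReflTransGen (SymRel W B s) c c')

/-- `(W,B)` is connected: it cannot be split into two disjoint latin bitrades. -/
def ConnectedBitrade {R C S : Type*} (W B : Set (R × C × S)) : Prop :=
  ¬ ∃ W₁ W₂ B₁ B₂ : Set (R × C × S),
      IsLatinBitrade W₁ B₁ ∧ IsLatinBitrade W₂ B₂ ∧
      W₁ ∩ W₂ = ∅ ∧ W = W₁ ∪ W₂ ∧ B = B₁ ∪ B₂

namespace Stmt7Aux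

/-- The first three rows of the Cayley table of `ZMod n`. -/
def Wn (n : ℕ) : Set (Fin 3 × ZMod n × ZMod n) :=
  {t | t.2.2 = ((t.1 : ℕ) : ZMod n) + t.2.1}

/-- The cyclic row-shift of `Wn`. -/
def Bn (n : ℕ) : Set (Fin 3 × ZMod n × ZMod n) :=
  {t | t.2.2 = ((((t.1 : ℕ) + 1) % 3 : ℕ) : ZMod n) + t.2.1}

variable {n : ℕ}

lemma mem_Wn {i : Fin 3} {c s : ZMod n} :
    (i, c, s) ∈ Wn n ↔ s = ((i : ℕ) : ZMod n) + c := Iff.rfl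

lemma mem_Bn {i : Fin 3} {c s : ZMod n} :
    (i, c, s) ∈ Bn n ↔ s = ((((i : ℕ) + 1) % 3 : ℕ) : ZMod n) + c := Iff.rfl

lemma castinj (hn : 3 ≤ n) {a b : ℕ} (ha : a < 3) (hb : b < 3)
    (h : (a : ZMod n) = b) : a = b := by
  haveI : NeZero n := ⟨by omega⟩
  have := congrArg ZMod.val h
  rwa [ZMod.val_cast_of_lt (by omega), ZMod.val_cast_of_lt (by omega)] at this

lemma castne (hn : 3 ≤ n) {a b : ℕ} (ha : a < 3) (hb : b < 3) (hab : a ≠ b) :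
    (a : ZMod n) ≠ (b : ZMod n) := fun h => hab (castinj hn ha hb h)

lemma plsW (hn : 3 ≤ n) : IsPLS (Wn n) := by
  rintro ⟨i, c, s⟩ h1 ⟨i', c', s'⟩ h2
  rw [mem_Wn] at h1 h2
  subst h1; subst h2
  refine ⟨?_, ?_, ?_⟩ <;> rintro ⟨e1, e2⟩ <;> simp only at e1 e2
  · subst e1; subst e2; rfl
  · subst e1
    have hc : c = c' := by rwa [add_right_inj] at e2
    subst hc; rfl
  · subst e1
    have hi : ((i : ℕ) : ZMod n) = ((i' : ℕ) : ZMod n) := by rwa [add_left_inj] at e2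
    have h2 : i = i' := Fin.ext (castinj hn i.isLt i'.isLt hi)
    subst h2; rfl

lemma plsB (hn : 3 ≤ n) : IsPLS (Bn n) := by
  rintro ⟨i, c, s⟩ h1 ⟨i', c', s'⟩ h2
  rw [mem_Bn] at h1 h2
  subst h1; subst h2
  refine ⟨?_, ?_, ?_⟩ <;> rintro ⟨e1, e2⟩ <;> simp only at e1 e2
  · subst e1; subst e2; rfl
  · subst e1
    have hc : c = c' := by rwa [add_right_inj] at e2
    subst hc; rfl
  · subst e1
    have hi : ((((i : ℕ) + 1) % 3 : ℕ) : ZMod n) = ((((i' : ℕ) + 1) % 3 : ℕ) : ZMod n) := by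
      rwa [add_left_inj] at e2
    have h3 : ((i : ℕ) + 1) % 3 = ((i' : ℕ) + 1) % 3 :=
      castinj hn (by omega) (by omega) hi
    have h4 : i = i' := Fin.ext (by have := i.isLt; have := i'.isLt; omega)
    subst h4; rfl

lemma btWB (hn : 3 ≤ n) : BitradeCond (Wn n) (Bn n) := by
  rintro ⟨i, c, s⟩ ht
  rw [mem_Wn] at ht
  have hilt := i.isLt
  have hne : ((i : ℕ) : ZMod n) ≠ ((((i : ℕ) + 1) % 3 : ℕ) : ZMod n) :=
    castne hn hilt (by omega) (by omega)
  refine ⟨⟨⟨((i : ℕ) + 2) % 3, by omega⟩, ⟨?_, ?_⟩, ?_⟩,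
      ⟨c + ((i : ℕ) : ZMod n) - ((((i : ℕ) + 1) % 3 : ℕ) : ZMod n), ⟨?_, ?_⟩, ?_⟩,
      ⟨((((i : ℕ) + 1) % 3 : ℕ) : ZMod n) + c, ⟨?_, ?_⟩, ?_⟩⟩
  · intro h
    have := congrArg Fin.val h
    simp only at this
    omega
  · show s = _ + c
    have h3 : (((i : ℕ) + 2) % 3 + 1) % 3 = (i : ℕ) := by omega
    rw [h3]; exact ht
  · rintro y ⟨hy1, hy2⟩
    rw [mem_Bn] at hy2
    have hc : ((((y : ℕ) + 1) % 3 : ℕ) : ZMod n) = ((i : ℕ) : ZMod n) := by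
      have := hy2.symm.trans ht
      rwa [add_left_inj] at this
    have := castinj hn (by omega) hilt hc
    have hy := y.isLt
    refine Fin.ext ?_
    show (y : ℕ) = ((i : ℕ) + 2) % 3
    omega
  · intro h
    apply hne
    have : ((i : ℕ) : ZMod n) = ((((i : ℕ) + 1) % 3 : ℕ) : ZMod n) := by
      linear_combination h
    exact this
  · show s = _ + _
    linear_combination ht
  · rintro y ⟨hy1, hy2⟩
    rw [mem_Bn] at hy2
    simp only at hy2
    linear_combination ht - hy2
  · intro h
    exact hne (by linear_combination -ht - h)
  · exact mem_Bn.mpr rfl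
  · rintro y ⟨hy1, hy2⟩
    rw [mem_Bn] at hy2
    exact hy2

lemma btBW (hn : 3 ≤ n) : BitradeCond (Bn n) (Wn n) := by
  rintro ⟨i, c, s⟩ ht
  rw [mem_Bn] at ht
  have hilt := i.isLt
  have hne : ((i : ℕ) : ZMod n) ≠ ((((i : ℕ) + 1) % 3 : ℕ) : ZMod n) :=
    castne hn hilt (by omega) (by omega)
  refine ⟨⟨⟨((i : ℕ) + 1) % 3, by omega⟩, ⟨?_, ?_⟩, ?_⟩,
      ⟨c + ((((i : ℕ) + 1) % 3 : ℕ) : ZMod n) - ((i : ℕ) : ZMod n), ⟨?_, ?_⟩, ?_⟩,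
      ⟨((i : ℕ) : ZMod n) + c, ⟨?_, ?_⟩, ?_⟩⟩
  · intro h
    have := congrArg Fin.val h
    simp only at this
    omega
  · show s = _ + c
    exact ht
  · rintro y ⟨hy1, hy2⟩
    rw [mem_Wn] at hy2
    have hc : ((y : ℕ) : ZMod n) = ((((i : ℕ) + 1) % 3 : ℕ) : ZMod n) := by
      have := hy2.symm.trans ht
      rwa [add_left_inj] at this
    have := castinj hn y.isLt (by omega) hc
    exact Fin.ext this
  · intro h
    apply hne
    linear_combination -h
  · show s = _ + _
    linear_combination ht
  · rintro y ⟨hy1, hy2⟩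
    rw [mem_Wn] at hy2
    simp only at hy2
    linear_combination ht - hy2
  · intro h
    exact hne (by linear_combination ht + h)
  · exact mem_Wn.mpr rfl
  · rintro y ⟨hy1, hy2⟩
    rw [mem_Wn] at hy2
    exact hy2

lemma disjWB (hn : 3 ≤ n) : Disjoint (Wn n) (Bn n) := by
  rw [Set.disjoint_left]
  rintro ⟨i, c, s⟩ hw hb
  rw [mem_Wn] at hw
  rw [mem_Bn] at hb
  have h : ((i : ℕ) : ZMod n) = ((((i : ℕ) + 1) % 3 : ℕ) : ZMod n) :=
    add_right_cancel (hw.symm.trans hb)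
  have hilt := i.isLt
  have := castinj hn hilt (by omega) h
  omega

/-- The shift of row `a`. -/
def dd (n a : ℕ) : ZMod n := (((a + 1) % 3 : ℕ) : ZMod n) - (a : ZMod n)

lemma exists_nat_mul (hn : 3 ≤ n) {d : ZMod n} (hd : IsUnit d) (s t : ZMod n) :
    ∃ k : ℕ, s + (k : ZMod n) * d = t := by
  haveI : NeZero n := ⟨by omega⟩
  obtain ⟨u, rfl⟩ := hd
  refine ⟨((t - s) * ↑u⁻¹).val, ?_⟩
  rw [ZMod.natCast_rightInverse _]
  have hinv : ((u⁻¹ : (ZMod n)ˣ) : ZMod n) * (u : ZMod n) = 1 := u.inv_mul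
  linear_combination (t - s) * hinv

lemma isUnit_dd (hn : 3 ≤ n) (ho : Odd n) (a : ℕ) (ha : a < 3) : IsUnit (dd n a) := by
  haveI : NeZero n := ⟨by omega⟩
  have h2 : IsUnit ((2 : ℕ) : ZMod n) :=
    (ZMod.isUnit_iff_coprime 2 n).mpr (Nat.coprime_two_left.mpr ho)
  interval_cases a
  · have : dd n 0 = 1 := by unfold dd; push_cast; ring
    rw [this]; exact isUnit_one
  · have : dd n 1 = 1 := by unfold dd; push_cast; ring
    rw [this]; exact isUnit_one
  · have : dd n 2 = -((2 : ℕ) : ZMod n) := by unfold dd; push_cast; ring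
    rw [this]; exact h2.neg

lemma rowStep (i : Fin 3) (s : ZMod n) :
    RowRel (Wn n) (Bn n) i s (s + dd n (i : ℕ)) := by
  refine ⟨s - ((i : ℕ) : ZMod n), ?_, ?_⟩
  · rw [mem_Wn]; ring
  · rw [mem_Bn]; unfold dd; ring

lemma rowIter (i : Fin 3) (s : ZMod n) (k : ℕ) :
    Relation.ReflTransGen (RowRel (Wn n) (Bn n) i) s (s + (k : ZMod n) * dd n (i : ℕ)) := by
  induction k with
  | zero => simpa using Relation.ReflTransGen.refl
  | succ m ih =>
      refine ih.tail ?_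
      have h := rowStep i (s + (m : ZMod n) * dd n (i : ℕ))
      have he : s + (m : ZMod n) * dd n (i : ℕ) + dd n (i : ℕ)
          = s + ((m + 1 : ℕ) : ZMod n) * dd n (i : ℕ) := by push_cast; ring
      rwa [he] at h

lemma sepRow (hn : 3 ≤ n) (ho : Odd n) (i : Fin 3) (s t : ZMod n) :
    Relation.ReflTransGen (RowRel (Wn n) (Bn n) i) s t := by
  obtain ⟨k, hk⟩ := exists_nat_mul hn (isUnit_dd hn ho (i : ℕ) i.isLt) s t
  have := rowIter i s k
  rwa [hk] at this

lemma colStep (a : ℕ) (ha : a < 3) (c : ZMod n) :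
    ColRel (Wn n) (Bn n) c ((a : ZMod n) + c) ((((a + 1) % 3 : ℕ) : ZMod n) + c) :=
  ⟨⟨a, ha⟩, rfl, rfl⟩

lemma colReach (hn : 3 ≤ n) (c : ZMod n) (a b : ℕ) (ha : a < 3) (hb : b < 3) :
    Relation.ReflTransGen (ColRel (Wn n) (Bn n) c) ((a : ZMod n) + c) ((b : ZMod n) + c) := by
  have h0 := colStep (n := n) 0 (by norm_num) c
  have h1 := colStep (n := n) 1 (by norm_num) c
  have h2 := colStep (n := n) 2 (by norm_num) c
  interval_cases a <;> interval_cases b <;>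
    first
      | exact Relation.ReflTransGen.refl
      | exact Relation.ReflTransGen.single h0
      | exact Relation.ReflTransGen.single h1
      | exact Relation.ReflTransGen.single h2
      | exact (Relation.ReflTransGen.single h0).tail h1
      | exact (Relation.ReflTransGen.single h1).tail h2
      | exact (Relation.ReflTransGen.single h2).tail h0

lemma sepCol (hn : 3 ≤ n) (c : ZMod n) (s t : ZMod n)
    (hs : ∃ r, (r, c, s) ∈ Wn n) (ht : ∃ r, (r, c, t) ∈ Wn n) :
    Relation.ReflTransGen (ColRel (Wn n) (Bn n) c) s t := by
  obtain ⟨i, hi⟩ := hs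
  obtain ⟨j, hj⟩ := ht
  rw [mem_Wn] at hi hj
  subst hi; subst hj
  exact colReach hn c _ _ i.isLt j.isLt

lemma symStep (a : ℕ) (ha : a < 3) (s : ZMod n) :
    SymRel (Wn n) (Bn n) s (s - (a : ZMod n)) (s - (((a + 1) % 3 : ℕ) : ZMod n)) := by
  refine ⟨⟨a, ha⟩, ?_, ?_⟩
  · rw [mem_Wn]; show s = ((a : ℕ) : ZMod n) + _; ring
  · rw [mem_Bn]; show s = (((a + 1) % 3 : ℕ) : ZMod n) + _; ring

lemma symReach (hn : 3 ≤ n) (s : ZMod n) (a b : ℕ) (ha : a < 3) (hb : b < 3) :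
    Relation.ReflTransGen (SymRel (Wn n) (Bn n) s) (s - (a : ZMod n)) (s - (b : ZMod n)) := by
  have h0 := symStep (n := n) 0 (by norm_num) s
  have h1 := symStep (n := n) 1 (by norm_num) s
  have h2 := symStep (n := n) 2 (by norm_num) s
  interval_cases a <;> interval_cases b <;>
    first
      | exact Relation.ReflTransGen.refl
      | exact Relation.ReflTransGen.single h0
      | exact Relation.ReflTransGen.single h1
      | exact Relation.ReflTransGen.single h2
      | exact (Relation.ReflTransGen.single h0).tail h1
      | exact (Relation.ReflTransGen.single h1).tail h2
      | exact (Relation.ReflTransGen.single h2).tail h0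

lemma sepSym (hn : 3 ≤ n) (s : ZMod n) (c c' : ZMod n)
    (hs : ∃ r, (r, c, s) ∈ Wn n) (ht : ∃ r, (r, c', s) ∈ Wn n) :
    Relation.ReflTransGen (SymRel (Wn n) (Bn n) s) c c' := by
  obtain ⟨i, hi⟩ := hs
  obtain ⟨j, hj⟩ := ht
  rw [mem_Wn] at hi hj
  have hc : c = s - (((i : ℕ) : ℕ) : ZMod n) := by linear_combination -hi
  have hc' : c' = s - (((j : ℕ) : ℕ) : ZMod n) := by linear_combination -hj
  rw [hc, hc']
  exact symReach hn s _ _ i.isLt j.isLt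

/-- next row -/
def nxt (i : Fin 3) : Fin 3 := ⟨((i : ℕ) + 1) % 3, by omega⟩

lemma connectedWB (hn : 3 ≤ n) (ho : Odd n) : ConnectedBitrade (Wn n) (Bn n) := by
  rintro ⟨W₁, W₂, B₁, B₂, hb1, hb2, hdisj, hWu, hBu⟩
  have hW1sub : W₁ ⊆ Wn n := hWu ▸ Set.subset_union_left
  have hW2sub : W₂ ⊆ Wn n := hWu ▸ Set.subset_union_right
  have hB1sub : B₁ ⊆ Bn n := hBu ▸ Set.subset_union_left
  obtain ⟨hW1ne, -, -, -, -, hcWB, hcBW⟩ := hb1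
  -- closure of `W₁` under the two basic moves
  have key : ∀ (i : Fin 3) (c : ZMod n), (i, c, ((i : ℕ) : ZMod n) + c) ∈ W₁ →
      (i, c + dd n (i : ℕ), ((i : ℕ) : ZMod n) + (c + dd n (i : ℕ))) ∈ W₁ ∧
      (nxt i, c, (((nxt i : Fin 3) : ℕ) : ZMod n) + c) ∈ W₁ := by
    intro i c hW
    obtain ⟨-, -, hs⟩ := hcWB _ hW
    obtain ⟨s', ⟨hs'ne, hs'B⟩, -⟩ := hs
    have hs'val : s' = ((((i : ℕ) + 1) % 3 : ℕ) : ZMod n) + c := hB1sub hs'B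
    subst hs'val
    obtain ⟨hr, hc, -⟩ := hcBW _ hs'B
    constructor
    · obtain ⟨c'', ⟨hc''ne, hc''W⟩, -⟩ := hc
      have hc''val : ((((i : ℕ) + 1) % 3 : ℕ) : ZMod n) + c = ((i : ℕ) : ZMod n) + c'' :=
        hW1sub hc''W
      have he : c'' = c + dd n (i : ℕ) := by unfold dd; linear_combination -hc''val
      have he2 : ((((i : ℕ) + 1) % 3 : ℕ) : ZMod n) + c
          = ((i : ℕ) : ZMod n) + (c + dd n (i : ℕ)) := by unfold dd; ring
      have hcW2 : (i, c'', ((((i : ℕ) + 1) % 3 : ℕ) : ZMod n) + c) ∈ W₁ := hc''W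
      rw [he, he2] at hcW2
      exact hcW2
    · obtain ⟨r'', ⟨hr''ne, hr''W⟩, -⟩ := hr
      have hr''val : ((((i : ℕ) + 1) % 3 : ℕ) : ZMod n) + c
          = (((r'' : Fin 3) : ℕ) : ZMod n) + c := hW1sub hr''W
      have : ((i : ℕ) + 1) % 3 = (r'' : ℕ) :=
        castinj hn (by omega) r''.isLt (by rwa [add_left_inj] at hr''val)
      have hreq : r'' = nxt i := Fin.ext (by simp only [nxt]; omega)
      subst hreq
      exact hr''W
  -- a row with one cell in `W₁` lies entirely in `W₁`
  have rowAll : ∀ (i : Fin 3) (c₀ : ZMod n),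
      (i, c₀, ((i : ℕ) : ZMod n) + c₀) ∈ W₁ →
      ∀ c, (i, c, ((i : ℕ) : ZMod n) + c) ∈ W₁ := by
    intro i c₀ h₀ c
    have iter : ∀ k : ℕ, (i, c₀ + (k : ZMod n) * dd n (i : ℕ),
        ((i : ℕ) : ZMod n) + (c₀ + (k : ZMod n) * dd n (i : ℕ))) ∈ W₁ := by
      intro k
      induction k with
      | zero => simpa using h₀
      | succ m ih =>
          have := (key i _ ih).1
          have he : c₀ + (m : ZMod n) * dd n (i : ℕ) + dd n (i : ℕ)
              = c₀ + ((m + 1 : ℕ) : ZMod n) * dd n (i : ℕ) := by push_cast; ring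
          rwa [he] at this
    obtain ⟨k, hk⟩ := exists_nat_mul hn (isUnit_dd hn ho (i : ℕ) i.isLt) c₀ c
    have := iter k
    rwa [hk] at this
  -- start from an element of `W₁`
  obtain ⟨⟨i₀, c₀, s₀⟩, ht₀⟩ := hW1ne
  have hs₀ : s₀ = ((i₀ : ℕ) : ZMod n) + c₀ := hW1sub ht₀
  subst hs₀
  have h0 : ∀ c, (i₀, c, ((i₀ : ℕ) : ZMod n) + c) ∈ W₁ := rowAll i₀ c₀ ht₀
  have h1 : ∀ c, (nxt i₀, c, (((nxt i₀ : Fin 3) : ℕ) : ZMod n) + c) ∈ W₁ :=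
    fun c => (key i₀ c (h0 c)).2
  have h2 : ∀ c, (nxt (nxt i₀), c, (((nxt (nxt i₀) : Fin 3) : ℕ) : ZMod n) + c) ∈ W₁ :=
    fun c => (key (nxt i₀) c (h1 c)).2
  have allW : ∀ t ∈ Wn n, t ∈ W₁ := by
    rintro ⟨j, c, s⟩ hmem
    rw [mem_Wn] at hmem
    subst hmem
    have hj := j.isLt
    have hi₀ := i₀.isLt
    have hcase : j = i₀ ∨ j = nxt i₀ ∨ j = nxt (nxt i₀) := by
      have e1 : (nxt i₀ : ℕ) = ((i₀ : ℕ) + 1) % 3 := rfl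
      have e2 : (nxt (nxt i₀) : ℕ) = (((i₀ : ℕ) + 1) % 3 + 1) % 3 := rfl
      have hv : (j : ℕ) = (i₀ : ℕ) ∨ (j : ℕ) = (nxt i₀ : ℕ)
          ∨ (j : ℕ) = (nxt (nxt i₀) : ℕ) := by
        rw [e1, e2]; omega
      rcases hv with h | h | h
      · exact Or.inl (Fin.ext h)
      · exact Or.inr (Or.inl (Fin.ext h))
      · exact Or.inr (Or.inr (Fin.ext h))
    rcases hcase with rfl | rfl | rfl
    · exact h0 c
    · exact h1 c
    · exact h2 c
  obtain ⟨⟨t₂, ht₂⟩, -, -, -, -, -, -⟩ := hb2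
  have : t₂ ∈ W₁ ∩ W₂ := ⟨allW t₂ (hW2sub ht₂), ht₂⟩
  rw [hdisj] at this
  exact this

/-- `Wn n` is equivalent to `Fin 3 × ZMod n`. -/
def eqvW (n : ℕ) : ↥(Wn n) ≃ Fin 3 × ZMod n where
  toFun t := (t.1.1, t.1.2.1)
  invFun p := ⟨(p.1, p.2, ((p.1 : ℕ) : ZMod n) + p.2), rfl⟩
  left_inv := by
    rintro ⟨⟨i, c, s⟩, h⟩
    have hs : s = ((i : ℕ) : ZMod n) + c := h
    subst hs
    rfl
  right_inv := fun p => rfl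

lemma cardW [NeZero n] : (Wn n).ncard = 3 * n := by
  rw [← Nat.card_coe_set_eq, Nat.card_congr (eqvW n), Nat.card_prod,
    Nat.card_eq_fintype_card, Nat.card_eq_fintype_card, Fintype.card_fin, ZMod.card]

lemma rowsUniv : {r | ∃ c s, (r, c, s) ∈ Wn n} = Set.univ :=
  Set.eq_univ_of_forall fun r => ⟨0, ((r : ℕ) : ZMod n) + 0, rfl⟩

lemma colsUniv : {c | ∃ r s, (r, c, s) ∈ Wn n} = Set.univ :=
  Set.eq_univ_of_forall fun c => ⟨0, (((0 : Fin 3) : ℕ) : ZMod n) + c, rfl⟩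

lemma symsUniv : {s | ∃ r c, (r, c, s) ∈ Wn n} = Set.univ :=
  Set.eq_univ_of_forall fun s =>
    ⟨0, s - (((0 : Fin 3) : ℕ) : ZMod n), by
      show s = (((0 : Fin 3) : ℕ) : ZMod n) + (s - (((0 : Fin 3) : ℕ) : ZMod n)); ring⟩

lemma cardRows : {r | ∃ c s, (r, c, s) ∈ Wn n}.ncard = 3 := by
  rw [rowsUniv, Set.ncard_univ, Nat.card_eq_fintype_card, Fintype.card_fin]

lemma cardCols [NeZero n] : {c | ∃ r s, (r, c, s) ∈ Wn n}.ncard = n := by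
  rw [colsUniv, Set.ncard_univ, Nat.card_eq_fintype_card, ZMod.card]

lemma cardSyms [NeZero n] : {s | ∃ r c, (r, c, s) ∈ Wn n}.ncard = n := by
  rw [symsUniv, Set.ncard_univ, Nat.card_eq_fintype_card, ZMod.card]

lemma nonemptyW (hn : 3 ≤ n) : (Wn n).Nonempty :=
  ⟨((0 : Fin 3), 0, (((0 : Fin 3) : ℕ) : ZMod n) + 0), rfl⟩

lemma nonemptyB (hn : 3 ≤ n) : (Bn n).Nonempty :=
  ⟨((0 : Fin 3), 0, (((((0 : Fin 3) : ℕ) + 1) % 3 : ℕ) : ZMod n) + 0), rfl⟩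

end Stmt7Aux

/-- For each `g ≥ 1`, the first three rows of the Cayley table of `ℤ_{2g+1}`, together with the
cyclic shift of these rows, form a separated connected latin bitrade whose genus, computed as
`(2 + |W| − |R| − |C| − |S|)/2`, equals `g`. -/
theorem stmt7 (g : ℕ) (hg : 1 ≤ g) :
    let W : Set (Fin 3 × ZMod (2 * g + 1) × ZMod (2 * g + 1)) :=
      {t | t.2.2 = ((t.1 : ℕ) : ZMod (2 * g + 1)) + t.2.1}
    let B : Set (Fin 3 × ZMod (2 * g + 1) × ZMod (2 * g + 1)) :=
      {t | t.2.2 = ((((t.1 : ℕ) + 1) % 3 : ℕ) : ZMod (2 * g + 1)) + t.2.1}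
    IsLatinBitrade W B ∧ Separated W B ∧ ConnectedBitrade W B ∧
    2 * (g : ℤ) = 2 + W.ncard
        - {r | ∃ c s, (r, c, s) ∈ W}.ncard
        - {c | ∃ r s, (r, c, s) ∈ W}.ncard
        - {s | ∃ r c, (r, c, s) ∈ W}.ncard := by
  intro W B
  haveI : NeZero (2 * g + 1) := ⟨by omega⟩
  have hn : 3 ≤ 2 * g + 1 := by omega
  have ho : Odd (2 * g + 1) := ⟨g, by ring⟩
  have hWeq : W = Stmt7Aux.Wn (2 * g + 1) := rfl
  have hBeq : B = Stmt7Aux.Bn (2 * g + 1) := rfl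
  rw [hWeq, hBeq]
  refine ⟨⟨Stmt7Aux.nonemptyW hn, Stmt7Aux.nonemptyB hn, Stmt7Aux.disjWB hn,
      Stmt7Aux.plsW hn, Stmt7Aux.plsB hn, Stmt7Aux.btWB hn, Stmt7Aux.btBW hn⟩,
    ⟨fun r s t _ _ => Stmt7Aux.sepRow hn ho r s t,
      fun c s t hs ht => Stmt7Aux.sepCol hn c s t hs ht,
      fun sy c c' hs ht => Stmt7Aux.sepSym hn sy c c' hs ht⟩,
    Stmt7Aux.connectedWB hn ho, ?_⟩
  rw [Stmt7Aux.cardW, Stmt7Aux.cardRows, Stmt7Aux.cardCols, Stmt7Aux.cardSyms]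
  push_cast
  ring
end

section
/- Let M' be an n×n matrix with nonnegative real entries and per(M') = 0. Then there exist subsets I of rows and J of columns with |I| = n−k+1 and |J| = k for some 1 ≤ k ≤ n such that M' has all entries zero on I × J (Frobenius–König theorem). -/
/-- The permanent of a square real matrix. -/
def permanent {n : ℕ} (M : Matrix (Fin n) (Fin n) ℝ) : ℝ :=
  ∑ σ : Equiv.Perm (Fin n), ∏ i, M i (σ i)

/-- Frobenius–König theorem: a nonnegative `n×n` matrix with zero permanent contains an
`(n−k+1) × k` all-zero submatrix for some `1 ≤ k ≤ n`. -/
theorem stmt11 (n : ℕ) (M' : Matrix (Fin n) (Fin n) ℝ)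
    (hnn : ∀ i j, 0 ≤ M' i j) (hper : permanent M' = 0) :
    ∃ k : ℕ, 1 ≤ k ∧ k ≤ n ∧
      ∃ (I J : Finset (Fin n)), I.card = n - k + 1 ∧ J.card = k ∧
        ∀ i ∈ I, ∀ j ∈ J, M' i j = 0 := by
  classical
  set t : Fin n → Finset (Fin n) :=
    fun i => Finset.univ.filter (fun j => M' i j ≠ 0) with ht
  by_cases hall : ∀ s : Finset (Fin n), s.card ≤ (s.biUnion t).card
  · exfalso
    obtain ⟨f, hfinj, hf⟩ :=
      (Finset.all_card_le_biUnion_card_iff_existsInjective' t).mp hall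
    have hbij : Function.Bijective f := Finite.injective_iff_bijective.mp hfinj
    set σ := Equiv.ofBijective f hbij with hσ
    have hterm : ∏ i, M' i (σ i) = 0 := by
      refine (Finset.sum_eq_zero_iff_of_nonneg ?_).mp hper σ (Finset.mem_univ _)
      intro τ _
      exact Finset.prod_nonneg fun i _ => hnn _ _
    obtain ⟨i, _, hi0⟩ := Finset.prod_eq_zero_iff.mp hterm
    have := hf i
    simp only [ht, Finset.mem_filter, Finset.mem_univ, true_and] at this
    exact this (by simpa [hσ, Equiv.ofBijective] using hi0)
  · push_neg at hall
    obtain ⟨A, hA⟩ := hall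
    set B := A.biUnion t with hB
    have hb : B.card < A.card := hA
    have hAn : A.card ≤ n := by
      simpa using Finset.card_le_univ A
    have hBn : B.card < n := lt_of_lt_of_le hb hAn
    obtain ⟨I, hIA, hIcard⟩ := Finset.exists_subset_card_eq (s := A) (n := B.card + 1) hb
    refine ⟨n - B.card, by omega, Nat.sub_le _ _, I, Bᶜ, ?_, ?_, ?_⟩
    · omega
    · simp [Finset.card_compl]
    · intro i hi j hj
      by_contra h
      have hjB : j ∈ B := Finset.mem_biUnion.mpr
        ⟨i, hIA hi, by simp [ht, h]⟩
      exact (Finset.mem_compl.mp hj) hjB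
end

section
/- The 3×9 latin rectangle W with rows (1,2,3,4,5,6,7,8,9), (2,3,4,5,6,7,8,9,1), (4,5,9,8,1,3,2,6,7) cannot be embedded in any group. Specifically, if W were embedded in a group G, then by Suschkewitsch's condition the permutations π₁₂ = (123456789) and π₁₃ = (148639725) would generate a permutation group of order at most 9; but the group generated by π₁₂ and π₁₃ has order greater than 9, a contradiction. -/
/-- The 3×9 latin rectangle with rows `(1,…,9)`, `(2,…,9,1)`, `(4,5,9,8,1,3,2,6,7)`,
written 0-based: symbols `0,…,8`. -/
def W13 : Fin 3 → Fin 9 → Fin 9 :=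
  ![![0, 1, 2, 3, 4, 5, 6, 7, 8],
    ![1, 2, 3, 4, 5, 6, 7, 8, 0],
    ![3, 4, 8, 7, 0, 2, 1, 5, 6]]

/-- The row permutation `π₁₂` (0-based: `s ↦ s + 1`). -/
noncomputable def pi12 : Equiv.Perm (Fin 9) :=
  Equiv.ofBijective (fun c => ![1, 2, 3, 4, 5, 6, 7, 8, 0] c) (by decide)

/-- The row permutation `π₁₃`. -/
noncomputable def pi13 : Equiv.Perm (Fin 9) :=
  Equiv.ofBijective (fun c => ![3, 4, 8, 7, 0, 2, 1, 5, 6] c) (by decide)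

/-- Computable copy of `pi12`. -/
def c12 : Equiv.Perm (Fin 9) :=
  ⟨fun c => ![1, 2, 3, 4, 5, 6, 7, 8, 0] c, fun c => ![8, 0, 1, 2, 3, 4, 5, 6, 7] c,
    by decide, by decide⟩

/-- Computable copy of `pi13`. -/
def c13 : Equiv.Perm (Fin 9) :=
  ⟨fun c => ![3, 4, 8, 7, 0, 2, 1, 5, 6] c, fun c => ![4, 6, 5, 0, 1, 7, 8, 3, 2] c,
    by decide, by decide⟩

lemma pi12_eq : pi12 = c12 := Equiv.ext fun _ => rfl

lemma pi13_eq : pi13 = c13 := Equiv.ext fun _ => rfl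

lemma card_gt :
    9 < Nat.card (Subgroup.closure {c12, c13} : Subgroup (Equiv.Perm (Fin 9))) := by
  set H := (Subgroup.closure {c12, c13} : Subgroup (Equiv.Perm (Fin 9))) with hH
  have hc12 : c12 ∈ H := Subgroup.subset_closure (by simp)
  have hc13 : c13 ∈ H := Subgroup.subset_closure (by simp)
  have hsub : (↑({1, c12, c12^2, c12^3, c12^4, c12^5, c12^6, c12^7, c12^8, c13} :
      Finset (Equiv.Perm (Fin 9))) : Set (Equiv.Perm (Fin 9))) ⊆ (H : Set (Equiv.Perm (Fin 9))) := by
    intro x hx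
    simp only [Finset.coe_insert, Finset.coe_singleton, Set.mem_insert_iff,
      Set.mem_singleton_iff] at hx
    rcases hx with h|h|h|h|h|h|h|h|h|h <;> subst h
    · exact one_mem H
    · exact hc12
    all_goals first
      | exact pow_mem hc12 _
      | exact hc13
  have hcard : ({1, c12, c12^2, c12^3, c12^4, c12^5, c12^6, c12^7, c12^8, c13} :
      Finset (Equiv.Perm (Fin 9))).card = 10 := by decide
  have h10 : 10 ≤ (H : Set (Equiv.Perm (Fin 9))).ncard := by
    calc 10 = (↑({1, c12, c12^2, c12^3, c12^4, c12^5, c12^6, c12^7, c12^8, c13} :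
        Finset (Equiv.Perm (Fin 9))) : Set (Equiv.Perm (Fin 9))).ncard := by
          rw [Set.ncard_coe_finset, hcard]
      _ ≤ _ := Set.ncard_le_ncard hsub (Set.toFinite _)
  have : (H : Set (Equiv.Perm (Fin 9))).ncard = Nat.card H := (Nat.card_coe_set_eq _).symm
  omega

/-- The latin rectangle `W13` cannot be embedded in any group; moreover the group generated
by the row permutations `π₁₂` and `π₁₃` has order greater than 9 (which, by Suschkewitsch's
condition, is why no embedding exists). -/
theorem stmt13 :
    (¬ ∃ (G : Type) (_ : Group G) (f : Fin 3 → G) (g : Fin 9 → G) (h : Fin 9 → G),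
        Function.Injective f ∧ Function.Injective g ∧ Function.Injective h ∧
        ∀ i j, f i * g j = h (W13 i j)) ∧
    9 < Nat.card (Subgroup.closure {pi12, pi13} : Subgroup (Equiv.Perm (Fin 9))) := by
  have hgt : 9 < Nat.card (Subgroup.closure {pi12, pi13} : Subgroup (Equiv.Perm (Fin 9))) := by
    rw [pi12_eq, pi13_eq]; exact card_gt
  refine ⟨?_, hgt⟩
  rintro ⟨G, _, f, g, h, hf, hg, hh, hmul⟩
  set H := (Subgroup.closure {pi12, pi13} : Subgroup (Equiv.Perm (Fin 9))) with hHdef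
  -- basic facts about W13
  have hW0 : ∀ j, W13 0 j = j := by decide
  have hW1 : ∀ j, W13 1 j = c12 j := by decide
  have hW2 : ∀ j, W13 2 j = c13 j := by decide
  have hj : ∀ j, h j = f 0 * g j := fun j => by
    have := hmul 0 j; rw [hW0] at this; exact this.symm
  -- every element of the closure acts on symbols by left translation through h
  have main : ∀ σ ∈ H, ∃ a : G, ∀ j, h (σ j) = a * h j := by
    intro σ hσ
    induction hσ using Subgroup.closure_induction with
    | mem x hx =>
      rcases hx with hx | hx <;> subst hx
      · refine ⟨f 1 * (f 0)⁻¹, fun j => ?_⟩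
        have : pi12 j = W13 1 j := by rw [hW1]; rfl
        rw [this, ← hmul 1 j, hj j]
        group
      · refine ⟨f 2 * (f 0)⁻¹, fun j => ?_⟩
        have : pi13 j = W13 2 j := by rw [hW2]; rfl
        rw [this, ← hmul 2 j, hj j]
        group
    | one => exact ⟨1, fun j => by simp⟩
    | mul x y _ _ hx hy =>
      obtain ⟨a, ha⟩ := hx
      obtain ⟨b, hb⟩ := hy
      exact ⟨a * b, fun j => by
        simp only [Equiv.Perm.mul_apply, ha, hb, mul_assoc]⟩
    | inv x _ hx =>
      obtain ⟨a, ha⟩ := hx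
      refine ⟨a⁻¹, fun j => ?_⟩
      have := ha (x⁻¹ j)
      rw [show x (x⁻¹ j) = j from x.apply_symm_apply j] at this
      rw [this]; group
  -- the map σ ↦ σ 0 is injective on the closure, so the closure has at most 9 elements
  have hinj : Function.Injective (fun σ : H => (σ : Equiv.Perm (Fin 9)) 0) := by
    rintro ⟨σ, hσ⟩ ⟨τ, hτ⟩ heq
    simp only at heq
    obtain ⟨a, ha⟩ := main σ hσ
    obtain ⟨b, hb⟩ := main τ hτ
    have hab : a = b := by
      have h1 := ha 0
      have h2 := hb 0
      rw [heq, h2] at h1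
      exact (mul_right_cancel h1.symm)
    exact Subtype.ext (Equiv.ext fun j => hh (by rw [ha j, hb j, hab]))
  have hle : Nat.card H ≤ 9 := by
    have := Nat.card_le_card_of_injective _ hinj
    simpa using this
  omega
end

section
/- If a latin rectangle contains two rows i, j such that the permutation π_{ij} (mapping, for each column, the symbol in row i to the symbol in row j) is not regular (i.e., its cycles do not all have the same length), then the latin rectangle cannot be embedded in any group. -/
/-- If a latin rectangle `L` (on rows `Fin r`, columns and symbols `Fin n`) has two rows `i, j`
such that the permutation `π = π_{ij}` (sending, in each column, the symbol of row `i` to the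
symbol of row `j`) is not regular — i.e. two of its cycles have different lengths — then `L`
cannot be embedded in any group. -/
theorem stmt14 {r n : ℕ} (L : Fin r → Fin n → Fin n)
    (hrow : ∀ i, Function.Bijective (L i))
    (hcol : ∀ c, Function.Injective (fun i => L i c))
    (i j : Fin r) (π : Equiv.Perm (Fin n))
    (hπ : ∀ c, π (L i c) = L j c)
    (hirreg : ∃ s t : Fin n,
      Function.minimalPeriod (⇑π) s ≠ Function.minimalPeriod (⇑π) t) :
    ¬ ∃ (G : Type) (_ : Group G) (f : Fin r → G) (g : Fin n → G) (h : Fin n → G),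
        Function.Injective f ∧ Function.Injective g ∧ Function.Injective h ∧
        ∀ a b, f a * g b = h (L a b) := by
  rintro ⟨G, _, f, g, h, hf, hg, hh, hmul⟩
  set u : G := f j * (f i)⁻¹ with hu
  have key : ∀ x, h (π x) = u * h x := by
    intro x
    obtain ⟨c, rfl⟩ := (hrow i).2 x
    rw [hπ c, ← hmul j c, ← hmul i c, hu]
    group
  have iter : ∀ k x, h ((⇑π)^[k] x) = u ^ k * h x := by
    intro k
    induction k with
    | zero => intro x; simp
    | succ k ih =>
      intro x
      rw [Function.iterate_succ_apply', key, ih, pow_succ', hu]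
      group
  have per : ∀ (k : ℕ) (x : Fin n), Function.IsPeriodicPt (⇑π) k x ↔ u ^ k = 1 := by
    intro k x
    constructor
    · intro hx
      have h1 := iter k x
      rw [hx.eq] at h1
      have : u ^ k * h x = 1 * h x := by rw [one_mul, ← h1]
      exact mul_right_cancel this
    · intro hk
      have : h ((⇑π)^[k] x) = h x := by rw [iter k x, hk, one_mul]
      exact hh this
  have hper : ∀ x : Fin n, Function.IsPeriodicPt (⇑π) (orderOf π) x := by
    intro x
    show (⇑π)^[orderOf π] x = x
    rw [Equiv.Perm.iterate_eq_pow, pow_orderOf_eq_one]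
    rfl
  have pos : ∀ x : Fin n, 0 < Function.minimalPeriod (⇑π) x := fun x =>
    (hper x).minimalPeriod_pos (orderOf_pos π)
  have hle : ∀ s t : Fin n,
      Function.minimalPeriod (⇑π) s ≤ Function.minimalPeriod (⇑π) t := by
    intro s t
    apply Function.IsPeriodicPt.minimalPeriod_le (pos t)
    rw [per]
    exact (per _ t).mp (Function.isPeriodicPt_minimalPeriod _ _)
  obtain ⟨s, t, hne⟩ := hirreg
  exact hne (le_antisymm (hle s t) (hle t s))
end

section
/- Every latin bitrade has size at least 4, and a latin bitrade of size exactly 4 is an intercalate: W = {(r₁,c₁,s₁),(r₁,c₂,s₂),(r₂,c₁,s₂),(r₂,c₂,s₁)} and B = {(r₁,c₁,s₂),(r₁,c₂,s₁),(r₂,c₁,s₁),(r₂,c₂,s₂)} for distinct rows r₁≠r₂, columns c₁≠c₂ and symbols s₁≠s₂. -/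
section
variable {R C S : Type*} {W B : Set (R × C × S)}

lemma rowPartner (hWB : BitradeCond W B) (hBW : BitradeCond B W)
    {t : R × C × S} (ht : t ∈ W) :
    ∃ c' s', c' ≠ t.2.1 ∧ s' ≠ t.2.2 ∧ (t.1, c', s') ∈ W := by
  obtain ⟨-, ⟨c', ⟨hc, hcB⟩, -⟩, -⟩ := hWB t ht
  obtain ⟨-, -, ⟨s', ⟨hs, hsW⟩, -⟩⟩ := hBW _ hcB
  exact ⟨c', s', hc, hs, hsW⟩

lemma colPartner (hWB : BitradeCond W B) (hBW : BitradeCond B W)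
    {t : R × C × S} (ht : t ∈ W) :
    ∃ r' s', r' ≠ t.1 ∧ s' ≠ t.2.2 ∧ (r', t.2.1, s') ∈ W := by
  obtain ⟨⟨r', ⟨hr, hrB⟩, -⟩, -, -⟩ := hWB t ht
  obtain ⟨-, -, ⟨s', ⟨hs, hsW⟩, -⟩⟩ := hBW _ hrB
  exact ⟨r', s', hr, hs, hsW⟩

lemma symPartner (hWB : BitradeCond W B) (hBW : BitradeCond B W)
    {t : R × C × S} (ht : t ∈ W) :
    ∃ r' c', r' ≠ t.1 ∧ c' ≠ t.2.1 ∧ (r', c', t.2.2) ∈ W := by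
  obtain ⟨⟨r', ⟨hr, hrB⟩, -⟩, -, -⟩ := hWB t ht
  obtain ⟨-, ⟨c', ⟨hc, hcW⟩, -⟩, -⟩ := hBW _ hrB
  exact ⟨r', c', hr, hc, hcW⟩

lemma symDeterm (hWB : BitradeCond W B) (hBW : BitradeCond B W)
    {t : R × C × S} (ht : t ∈ W) :
    ∃ s' r'', s' ≠ t.2.2 ∧ (t.1, t.2.1, s') ∈ B ∧ r'' ≠ t.1 ∧ (r'', t.2.1, s') ∈ W := by
  obtain ⟨-, -, ⟨s', ⟨hs, hsB⟩, -⟩⟩ := hWB t ht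
  obtain ⟨⟨r'', ⟨hr, hrW⟩, -⟩, -, -⟩ := hBW _ hsB
  exact ⟨s', r'', hs, hsB, hr, hrW⟩

end

/-- Every latin bitrade has size at least 4, and a latin bitrade of size exactly 4 is an
intercalate. -/
theorem stmt16 {R C S : Type*} (W B : Set (R × C × S)) (hW : W.Finite) (hB : B.Finite)
    (h : IsLatinBitrade W B) :
    4 ≤ W.ncard ∧
    (W.ncard = 4 →
      ∃ (r₁ r₂ : R) (c₁ c₂ : C) (s₁ s₂ : S), r₁ ≠ r₂ ∧ c₁ ≠ c₂ ∧ s₁ ≠ s₂ ∧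
        W = {(r₁, c₁, s₁), (r₁, c₂, s₂), (r₂, c₁, s₂), (r₂, c₂, s₁)} ∧
        B = {(r₁, c₁, s₂), (r₁, c₂, s₁), (r₂, c₁, s₁), (r₂, c₂, s₂)}) := by
  classical
  obtain ⟨⟨t, htW⟩, hBne, hdisj, hPW, hPB, hWB, hBW⟩ := h
  obtain ⟨r₁, c₁, s₁⟩ := t
  obtain ⟨r₂, s₂, hr21, hs21, huW⟩ := colPartner hWB hBW htW
  obtain ⟨c₂, s₃, hc21, hs31, hbW⟩ := rowPartner hWB hBW htW
  obtain ⟨c₃, s₄, hc31, hs42, hdW⟩ := rowPartner hWB hBW huW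
  simp only at hr21 hs21 hc21 hs31 hc31 hs42 huW hbW hdW
  have hab : (r₁, c₁, s₁) ≠ ((r₁, c₂, s₃) : R × C × S) :=
    fun h => hc21 (congrArg (fun p : R × C × S => p.2.1) h).symm
  have hau : (r₁, c₁, s₁) ≠ ((r₂, c₁, s₂) : R × C × S) :=
    fun h => hr21 (congrArg (fun p : R × C × S => p.1) h).symm
  have had : (r₁, c₁, s₁) ≠ ((r₂, c₃, s₄) : R × C × S) :=
    fun h => hr21 (congrArg (fun p : R × C × S => p.1) h).symm
  have hbu : (r₁, c₂, s₃) ≠ ((r₂, c₁, s₂) : R × C × S) :=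
    fun h => hr21 (congrArg (fun p : R × C × S => p.1) h).symm
  have hbd : (r₁, c₂, s₃) ≠ ((r₂, c₃, s₄) : R × C × S) :=
    fun h => hr21 (congrArg (fun p : R × C × S => p.1) h).symm
  have hud : (r₂, c₁, s₂) ≠ ((r₂, c₃, s₄) : R × C × S) :=
    fun h => hc31 (congrArg (fun p : R × C × S => p.2.1) h).symm
  have hsub : ({(r₁, c₁, s₁), (r₁, c₂, s₃), (r₂, c₁, s₂), (r₂, c₃, s₄)} : Set (R × C × S)) ⊆ W := by
    intro x hx
    rcases hx with rfl | rfl | rfl | rfl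
    exacts [htW, hbW, huW, hdW]
  have h4 : ({(r₁, c₁, s₁), (r₁, c₂, s₃), (r₂, c₁, s₂), (r₂, c₃, s₄)} : Set (R × C × S)).ncard = 4 := by
    rw [Set.ncard_insert_of_notMem (by simp [hab, hau, had]) (Set.toFinite _),
        Set.ncard_insert_of_notMem (by simp [hbu, hbd]) (Set.toFinite _),
        Set.ncard_insert_of_notMem (by simp [hud]) (Set.toFinite _),
        Set.ncard_singleton]
  constructor
  · calc 4 = ({(r₁, c₁, s₁), (r₁, c₂, s₃), (r₂, c₁, s₂), (r₂, c₃, s₄)} : Set (R × C × S)).ncard :=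
        h4.symm
      _ ≤ W.ncard := Set.ncard_le_ncard hsub hW
  intro hcard
  have hWeq : ({(r₁, c₁, s₁), (r₁, c₂, s₃), (r₂, c₁, s₂), (r₂, c₃, s₄)} : Set (R × C × S)) = W :=
    Set.eq_of_subset_of_ncard_le hsub (by rw [hcard, h4]) hW
  have memW0 : ∀ x ∈ W, x = (r₁, c₁, s₁) ∨ x = (r₁, c₂, s₃) ∨ x = (r₂, c₁, s₂) ∨
      x = (r₂, c₃, s₄) := by
    intro x hx
    rw [← hWeq] at hx
    simpa using hx
  -- step A : s₄ = s₁
  have hs41 : s₄ = s₁ := by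
    obtain ⟨r', c', hr', hc', hvW⟩ := symPartner hWB hBW htW
    simp only at hr' hc' hvW
    rcases memW0 _ hvW with h | h | h | h <;> simp only [Prod.mk.injEq] at h
    · exact absurd h.1 hr'
    · exact absurd h.1 hr'
    · exact absurd h.2.1 hc'
    · exact h.2.2.symm
  -- step B : s₃ = s₂
  have hs32 : s₃ = s₂ := by
    obtain ⟨r', c', hr', hc', hvW⟩ := symPartner hWB hBW huW
    simp only at hr' hc' hvW
    rcases memW0 _ hvW with h | h | h | h <;> simp only [Prod.mk.injEq] at h
    · exact absurd h.2.2 hs21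
    · exact h.2.2.symm
    · exact absurd h.1 hr'
    · exact absurd (h.2.2.trans hs41) hs21
  -- step C : c₃ = c₂
  have hc32 : c₃ = c₂ := by
    obtain ⟨r', s', hr', hs', hvW⟩ := colPartner hWB hBW hbW
    simp only at hr' hs' hvW
    rcases memW0 _ hvW with h | h | h | h <;> simp only [Prod.mk.injEq] at h
    · exact absurd h.2.1 hc21
    · exact absurd h.1 hr'
    · exact absurd h.2.1 hc21
    · exact h.2.1.symm
  have hWeq2 : W = ({(r₁, c₁, s₁), (r₁, c₂, s₂), (r₂, c₁, s₂), (r₂, c₂, s₁)} : Set (R × C × S)) := by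
    rw [← hWeq, hs41, hs32, hc32]
  have memW : ∀ x ∈ W, x = (r₁, c₁, s₁) ∨ x = (r₁, c₂, s₂) ∨ x = (r₂, c₁, s₂) ∨
      x = (r₂, c₂, s₁) := by
    intro x hx
    rw [hWeq2] at hx
    simpa using hx
  have hbW2 : ((r₁, c₂, s₂) : R × C × S) ∈ W := by rw [hWeq2]; simp
  have hdW2 : ((r₂, c₂, s₁) : R × C × S) ∈ W := by rw [hWeq2]; simp
  refine ⟨r₁, r₂, c₁, c₂, s₁, s₂, fun h => hr21 h.symm, fun h => hc21 h.symm,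
    fun h => hs21 h.symm, hWeq2, ?_⟩
  have hB1 : ((r₁, c₁, s₂) : R × C × S) ∈ B := by
    obtain ⟨s', r'', hs', hsB, hr'', hrW⟩ := symDeterm hWB hBW htW
    simp only at hs' hsB hr'' hrW
    rcases memW _ hrW with h | h | h | h <;> simp only [Prod.mk.injEq] at h
    · exact absurd h.1 hr''
    · exact absurd h.1 hr''
    · rw [h.2.2] at hsB; exact hsB
    · exact absurd h.2.1.symm hc21
  have hB2 : ((r₁, c₂, s₁) : R × C × S) ∈ B := by
    obtain ⟨s', r'', hs', hsB, hr'', hrW⟩ := symDeterm hWB hBW hbW2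
    simp only at hs' hsB hr'' hrW
    rcases memW _ hrW with h | h | h | h <;> simp only [Prod.mk.injEq] at h
    · exact absurd h.2.1 hc21
    · exact absurd h.1 hr''
    · exact absurd h.2.1 hc21
    · rw [h.2.2] at hsB; exact hsB
  have hB3 : ((r₂, c₁, s₁) : R × C × S) ∈ B := by
    obtain ⟨s', r'', hs', hsB, hr'', hrW⟩ := symDeterm hWB hBW huW
    simp only at hs' hsB hr'' hrW
    rcases memW _ hrW with h | h | h | h <;> simp only [Prod.mk.injEq] at h
    · rw [h.2.2] at hsB; exact hsB
    · exact absurd h.2.1.symm hc21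
    · exact absurd h.1 hr''
    · exact absurd h.2.1.symm hc21
  have hB4 : ((r₂, c₂, s₂) : R × C × S) ∈ B := by
    obtain ⟨s', r'', hs', hsB, hr'', hrW⟩ := symDeterm hWB hBW hdW2
    simp only at hs' hsB hr'' hrW
    rcases memW _ hrW with h | h | h | h <;> simp only [Prod.mk.injEq] at h
    · exact absurd h.2.1 hc21
    · rw [h.2.2] at hsB; exact hsB
    · exact absurd h.2.1 hc21
    · exact absurd h.1 hr''
  apply Set.Subset.antisymm
  · intro x hx
    obtain ⟨p, q, σ⟩ := x
    obtain ⟨⟨r', ⟨hr', hrW⟩, -⟩, ⟨c', ⟨hc', hcW⟩, -⟩, -⟩ := hBW _ hx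
    simp only at hr' hrW hc' hcW
    have hqσ : (q = c₁ ∧ σ = s₁) ∨ (q = c₂ ∧ σ = s₂) ∨ (q = c₁ ∧ σ = s₂) ∨
        (q = c₂ ∧ σ = s₁) := by
      rcases memW _ hrW with h | h | h | h <;> simp only [Prod.mk.injEq] at h <;> tauto
    have hp : p = r₁ ∨ p = r₂ := by
      rcases memW _ hcW with h | h | h | h <;> simp only [Prod.mk.injEq] at h <;> tauto
    have hnW : ((p, q, σ) : R × C × S) ∉ W := Set.disjoint_right.1 hdisj hx
    rw [hWeq2] at hnW
    rcases hp with rfl | rfl <;>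
      rcases hqσ with ⟨rfl, rfl⟩ | ⟨rfl, rfl⟩ | ⟨rfl, rfl⟩ | ⟨rfl, rfl⟩ <;>
      first
        | exact Set.mem_insert _ _
        | (right; exact Set.mem_insert _ _)
        | (right; right; exact Set.mem_insert _ _)
        | (right; right; right; exact rfl)
        | exact absurd (by simp) hnW
  · intro x hx
    rcases hx with rfl | rfl | rfl | rfl
    exacts [hB1, hB2, hB3, hB4]
end

section
/- The partial latin square W = {(r₀,c₀,0),(r₀,c₁,1),(r₀,c₂,2),(r₀,c₃,3),(r₁,c₀,1),(r₁,c₁,0),(r₂,c₀,2),(r₂,c₂,1),(r₃,c₁,3),(r₃,c₃,0)} (size 10) cannot be embedded in any cyclic group. Precisely: there is no integer m ≥ 1 and no injections R → ℤ_m, C → ℤ_m, S → ℤ_m sending rows, columns and symbols to elements of ℤ_m such that for every (r,c,s) ∈ W the images satisfy r + c = s in ℤ_m. -/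
/-- The size-10 partial latin square of Example `noncyc`, with rows `r₀,…,r₃`,
columns `c₀,…,c₃` and symbols `0,…,3` (all indexed by `Fin 4`). -/
def W17 : Set (Fin 4 × Fin 4 × Fin 4) :=
  {(0, 0, 0), (0, 1, 1), (0, 2, 2), (0, 3, 3), (1, 0, 1),
   (1, 1, 0), (2, 0, 2), (2, 2, 1), (3, 1, 3), (3, 3, 0)}

/-- In `ZMod m` there is at most one element of order 2. -/
lemma two_torsion_unique {m : ℕ} (hm : 1 ≤ m) {x y : ZMod m}
    (hx : x + x = 0) (hy : y + y = 0) (hx0 : x ≠ 0) (hy0 : y ≠ 0) : x = y := by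
  haveI : NeZero m := ⟨by omega⟩
  have key : ∀ z : ZMod m, z + z = 0 → z ≠ 0 → z.val + z.val = m := by
    intro z hz hz0
    have h1 : (z + z).val = 0 := by rw [hz]; exact ZMod.val_zero
    have h2 : (z + z).val = (z.val + z.val) % m := ZMod.val_add z z
    have h3 : (z.val + z.val) % m = 0 := by omega
    have hlt : z.val < m := ZMod.val_lt z
    have hz0' : z.val ≠ 0 := by
      intro h; exact hz0 ((ZMod.val_eq_zero z).mp h)
    have hge : m ≤ z.val + z.val := by
      by_contra hlt2
      rw [Nat.mod_eq_of_lt (by omega)] at h3; omega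
    have hsub : (z.val + z.val) % m = z.val + z.val - m := by
      rw [Nat.mod_eq_sub_mod hge, Nat.mod_eq_of_lt (by omega)]
    omega
  have hv : x.val = y.val := by
    have := key x hx hx0
    have := key y hy hy0
    omega
  have := congrArg (Nat.cast : ℕ → ZMod m) hv
  simpa [ZMod.natCast_val, ZMod.cast_id] using this

/-- `W17` cannot be embedded in any cyclic group: there is no `m ≥ 1` and injections of the
rows, columns and symbols into `ℤ_m` such that `r + c = s` for every triple `(r,c,s) ∈ W17`. -/
theorem stmt17 :
    ¬ ∃ (m : ℕ), 1 ≤ m ∧ ∃ (fr fc fs : Fin 4 → ZMod m),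
        Function.Injective fr ∧ Function.Injective fc ∧ Function.Injective fs ∧
        ∀ t ∈ W17, fr t.1 + fc t.2.1 = fs t.2.2 := by
  rintro ⟨m, hm, fr, fc, fs, hfr, hfc, hfs, h⟩
  have h1 := h (0, 0, 0) (by simp [W17])
  have h2 := h (0, 1, 1) (by simp [W17])
  have h3 := h (0, 2, 2) (by simp [W17])
  have h4 := h (0, 3, 3) (by simp [W17])
  have h5 := h (1, 0, 1) (by simp [W17])
  have h6 := h (1, 1, 0) (by simp [W17])
  have h7 := h (2, 0, 2) (by simp [W17])
  have h8 := h (2, 2, 1) (by simp [W17])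
  have h9 := h (3, 1, 3) (by simp [W17])
  have h10 := h (3, 3, 0) (by simp [W17])
  simp only at h1 h2 h3 h4 h5 h6 h7 h8 h9 h10
  have ha : (fs 1 - fs 0) + (fs 1 - fs 0) = 0 := by
    linear_combination h1 + h6 - h2 - h5
  have hb : (fs 3 - fs 2) + (fs 3 - fs 2) = 0 := by
    linear_combination -h9 + h10 + h2 - h4 + h7 - h1 - h8 + h3
  have ha0 : fs 1 - fs 0 ≠ 0 := by
    intro hh
    have : fs 1 = fs 0 := by linear_combination hh
    exact absurd (hfs this) (by decide)
  have hb0 : fs 3 - fs 2 ≠ 0 := by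
    intro hh
    have : fs 3 = fs 2 := by linear_combination hh
    exact absurd (hfs this) (by decide)
  have hab : fs 1 - fs 0 = fs 3 - fs 2 := two_torsion_unique hm ha hb ha0 hb0
  have hfr23 : fr 2 = fr 3 := by
    linear_combination h7 - h1 - h9 + h2 + hab
  exact absurd (hfr hfr23) (by decide)
end

section
/- Let (W,B) be a connected latin bitrade with W embedded in a group G (so xy = z for all (x,y,z) ∈ W), and let φ: G → ℤ be a group homomorphism. Then W embeds in the kernel of φ. -/
/-- Two triples share (at least) two of their three coordinates. -/
def Share2 {R C S : Type*} (t t' : R × C × S) : Prop :=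
  (t.1 = t'.1 ∧ t.2.1 = t'.2.1) ∨ (t.1 = t'.1 ∧ t.2.2 = t'.2.2) ∨
    (t.2.1 = t'.2.1 ∧ t.2.2 = t'.2.2)

lemma Share2.symm' {R C S : Type*} {t t' : R × C × S} (h : Share2 t t') : Share2 t' t := by
  unfold Share2 at *; tauto

lemma isPLS_mono {R C S : Type*} {P P' : Set (R × C × S)} (hsub : P' ⊆ P) (h : IsPLS P) :
    IsPLS P' := fun t₁ h₁ t₂ h₂ => h t₁ (hsub h₁) t₂ (hsub h₂)

lemma bitradeCond_inter {R C S : Type*} {X Y V : Set (R × C × S)}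
    (hXY : BitradeCond X Y)
    (hcl : ∀ t ∈ X, t ∈ V → ∀ y ∈ Y, Share2 t y → y ∈ V) :
    BitradeCond (X ∩ V) (Y ∩ V) := by
  intro t ht
  obtain ⟨h1, h2, h3⟩ := hXY t ht.1
  refine ⟨?_, ?_, ?_⟩
  · obtain ⟨r', ⟨hne, hmem⟩, huniq⟩ := h1
    exact ⟨r', ⟨hne, hmem, hcl t ht.1 ht.2 _ hmem (Or.inr (Or.inr ⟨rfl, rfl⟩))⟩,
      fun y hy => huniq y ⟨hy.1, hy.2.1⟩⟩
  · obtain ⟨c', ⟨hne, hmem⟩, huniq⟩ := h2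
    exact ⟨c', ⟨hne, hmem, hcl t ht.1 ht.2 _ hmem (Or.inr (Or.inl ⟨rfl, rfl⟩))⟩,
      fun y hy => huniq y ⟨hy.1, hy.2.1⟩⟩
  · obtain ⟨s', ⟨hne, hmem⟩, huniq⟩ := h3
    exact ⟨s', ⟨hne, hmem, hcl t ht.1 ht.2 _ hmem (Or.inl ⟨rfl, rfl⟩)⟩,
      fun y hy => huniq y ⟨hy.1, hy.2.1⟩⟩

/-- Splitting principle: a set closed under the "share two coordinates across the bitrade"
relation that meets `W` must contain all of `W` and `B`, by connectedness. -/
lemma splitClosed {R C S : Type*} {W B : Set (R × C × S)}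
    (h : IsLatinBitrade W B) (hconn : ConnectedBitrade W B)
    (U : Set (R × C × S))
    (hclWB : ∀ t ∈ W, t ∈ U → ∀ y ∈ B, Share2 t y → y ∈ U)
    (hclBW : ∀ t ∈ B, t ∈ U → ∀ y ∈ W, Share2 t y → y ∈ U)
    (hne : ∃ t ∈ W, t ∈ U) :
    (∀ t ∈ W, t ∈ U) ∧ (∀ b ∈ B, b ∈ U) := by
  obtain ⟨hWne, hBne, hdisj, hWpls, hBpls, hWB, hBW⟩ := h
  have hclWB' : ∀ t ∈ W, t ∈ Uᶜ → ∀ y ∈ B, Share2 t y → y ∈ Uᶜ := by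
    intro t ht htU y hy hs hyU
    exact htU (hclBW y hy hyU t ht hs.symm')
  have hclBW' : ∀ t ∈ B, t ∈ Uᶜ → ∀ y ∈ W, Share2 t y → y ∈ Uᶜ := by
    intro t ht htU y hy hs hyU
    exact htU (hclWB y hy hyU t ht hs.symm')
  have hWU : ∀ t ∈ W, t ∈ U := by
    by_contra hcon
    push_neg at hcon
    obtain ⟨t₀, ht₀, ht₀U⟩ := hcon
    obtain ⟨t₁, ht₁, ht₁U⟩ := hne
    -- B-partners via the cell
    have cellpart : ∀ t ∈ W, ∃ b ∈ B, Share2 t b := by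
      intro t ht
      obtain ⟨s', ⟨hne', hmem⟩, _⟩ := (hWB t ht).2.2
      exact ⟨_, hmem, Or.inl ⟨rfl, rfl⟩⟩
    obtain ⟨b₁, hb₁, hsb₁⟩ := cellpart t₁ ht₁
    obtain ⟨b₀, hb₀, hsb₀⟩ := cellpart t₀ ht₀
    refine hconn ⟨W ∩ U, W ∩ Uᶜ, B ∩ U, B ∩ Uᶜ,
      ⟨⟨t₁, ht₁, ht₁U⟩, ⟨b₁, hb₁, hclWB t₁ ht₁ ht₁U b₁ hb₁ hsb₁⟩,
        hdisj.mono Set.inter_subset_left Set.inter_subset_left,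
        isPLS_mono Set.inter_subset_left hWpls, isPLS_mono Set.inter_subset_left hBpls,
        bitradeCond_inter hWB hclWB, bitradeCond_inter hBW hclBW⟩,
      ⟨⟨t₀, ht₀, ht₀U⟩, ⟨b₀, hb₀, hclWB' t₀ ht₀ ht₀U b₀ hb₀ hsb₀⟩,
        hdisj.mono Set.inter_subset_left Set.inter_subset_left,
        isPLS_mono Set.inter_subset_left hWpls, isPLS_mono Set.inter_subset_left hBpls,
        bitradeCond_inter hWB hclWB', bitradeCond_inter hBW hclBW'⟩,
      ?_, ?_, ?_⟩
    · ext x; simp only [Set.mem_inter_iff, Set.mem_compl_iff, Set.mem_empty_iff_false]; tauto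
    · ext x; simp only [Set.mem_inter_iff, Set.mem_compl_iff, Set.mem_union]; tauto
    · ext x; simp only [Set.mem_inter_iff, Set.mem_compl_iff, Set.mem_union]; tauto
  refine ⟨hWU, fun b hb => ?_⟩
  obtain ⟨s', ⟨hne', hmem⟩, _⟩ := (hBW b hb).2.2
  exact hclWB _ hmem (hWU _ hmem) b hb (Or.inl ⟨rfl, rfl⟩)


set_option maxHeartbeats 4000000 in
/-- If `(W,B)` is a connected latin bitrade with `W` embedded in a group `G` (so `xy = z` for
every `(x,y,z) ∈ W`) and `φ : G → ℤ` is a homomorphism, then `W` embeds in the kernel of `φ`: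
there are maps of the rows, columns and symbols of `W` into `ker φ`, injective on the rows,
columns and symbols used by `W`, carrying every triple of `W` to a triple `(x',y',z')` of
`ker φ` with `x'y' = z'`. -/
theorem stmt18 {G : Type*} [Group G] (W B : Set (G × G × G)) (hfin : W.Finite)
    (h : IsLatinBitrade W B) (hconn : ConnectedBitrade W B)
    (hemb : ∀ t ∈ W, (t : G × G × G).1 * t.2.1 = t.2.2)
    (φ : G →* Multiplicative ℤ) :
    ∃ f g h : G → φ.ker,
      Set.InjOn f {x | ∃ y z, (x, y, z) ∈ W} ∧
      Set.InjOn g {y | ∃ x z, (x, y, z) ∈ W} ∧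
      Set.InjOn h {z | ∃ x y, (x, y, z) ∈ W} ∧
      ∀ t ∈ W, f (t : G × G × G).1 * g t.2.1 = h t.2.2 := by
  classical
  have hWne := h.1
  have hWpls := h.2.2.2.1
  have hBpls := h.2.2.2.2.1
  have hWB := h.2.2.2.2.2.1
  have hBW := h.2.2.2.2.2.2
  set ψ : G → ℤ := fun x => Multiplicative.toAdd (φ x) with hψdef
  have hψ : ∀ x y : G, ψ (x * y) = ψ x + ψ y := by
    intro x y; simp [hψdef, map_mul]
  -- choice functions for partners
  have h1 : ∀ t, t ∈ W → ∃ r', (r' ≠ t.1 ∧ (r', t.2.1, t.2.2) ∈ B) ∧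
      ∀ y, y ≠ t.1 ∧ (y, t.2.1, t.2.2) ∈ B → y = r' := fun t ht => (hWB t ht).1
  have h2 : ∀ t, t ∈ W → ∃ c', (c' ≠ t.2.1 ∧ (t.1, c', t.2.2) ∈ B) ∧
      ∀ y, y ≠ t.2.1 ∧ (t.1, y, t.2.2) ∈ B → y = c' := fun t ht => (hWB t ht).2.1
  have h3 : ∀ t, t ∈ W → ∃ s', (s' ≠ t.2.2 ∧ (t.1, t.2.1, s') ∈ B) ∧
      ∀ y, y ≠ t.2.2 ∧ (t.1, t.2.1, y) ∈ B → y = s' := fun t ht => (hWB t ht).2.2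
  have h4 : ∀ t, t ∈ B → ∃ r', (r' ≠ t.1 ∧ (r', t.2.1, t.2.2) ∈ W) ∧
      ∀ y, y ≠ t.1 ∧ (y, t.2.1, t.2.2) ∈ W → y = r' := fun t ht => (hBW t ht).1
  have h5 : ∀ t, t ∈ B → ∃ c', (c' ≠ t.2.1 ∧ (t.1, c', t.2.2) ∈ W) ∧
      ∀ y, y ≠ t.2.1 ∧ (t.1, y, t.2.2) ∈ W → y = c' := fun t ht => (hBW t ht).2.1
  have h6 : ∀ t, t ∈ B → ∃ s', (s' ≠ t.2.2 ∧ (t.1, t.2.1, s') ∈ W) ∧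
      ∀ y, y ≠ t.2.2 ∧ (t.1, t.2.1, y) ∈ W → y = s' := fun t ht => (hBW t ht).2.2
  choose! rW hrW hrWu using h1
  choose! cW hcW hcWu using h2
  choose! sW hsW hsWu using h3
  choose! rB hrB hrBu using h4
  choose! cB hcB hcBu using h5
  choose! sB hsB hsBu using h6
  -- B is finite
  have hBfin : B.Finite := by
    apply Set.Finite.of_finite_image (f := fun b => (b.1, b.2.1, sB b))
    · exact hfin.subset (by rintro x ⟨b, hb, rfl⟩; exact (hsB b hb).2)
    · intro b₁ hb₁ b₂ hb₂ heq
      have e1 : b₁.1 = b₂.1 := congrArg (·.1) heq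
      have e2 : b₁.2.1 = b₂.2.1 := congrArg (·.2.1) heq
      exact (hBpls b₁ hb₁ b₂ hb₂).1 ⟨e1, e2⟩
  -- the maximal symbol value m
  obtain ⟨m, hmW, hmEx⟩ : ∃ m : ℤ, (∀ t ∈ W, ψ t.2.2 ≤ m) ∧ ∃ t ∈ W, ψ t.2.2 = m := by
    have hWFne : hfin.toFinset.Nonempty := by
      obtain ⟨t, ht⟩ := hWne; exact ⟨t, hfin.mem_toFinset.2 ht⟩
    refine ⟨(hfin.toFinset.image fun t => ψ t.2.2).max' (hWFne.image _), ?_, ?_⟩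
    · intro t ht
      exact Finset.le_max' (hfin.toFinset.image fun t => ψ t.2.2) (ψ t.2.2)
        (Finset.mem_image.2 ⟨t, hfin.mem_toFinset.2 ht, rfl⟩)
    · obtain ⟨t, ht, he⟩ := Finset.mem_image.1
        ((hfin.toFinset.image fun t => ψ t.2.2).max'_mem (hWFne.image _))
      exact ⟨t, hfin.mem_toFinset.1 ht, he⟩
  -- levels
  have hlev : ∀ t ∈ W, ψ t.1 + ψ t.2.1 = ψ t.2.2 := by
    intro t ht; rw [← hemb t ht, hψ]
  have hmB : ∀ b ∈ B, ψ b.2.2 ≤ m := by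
    intro b hb; have := hmW _ (hrB b hb).2; simpa using this
  have hlevB : ∀ b ∈ B, ψ b.1 + ψ b.2.1 = ψ (sB b) := by
    intro b hb
    have := hlev _ (hsB b hb).2
    simpa using this
  have hlevB_le : ∀ b ∈ B, ψ b.1 + ψ b.2.1 ≤ m := by
    intro b hb; rw [hlevB b hb]; exact hmW _ (hsB b hb).2
  have hWFmem : ∀ x : G × G × G, x ∈ hfin.toFinset ↔ x ∈ W := fun _ => hfin.mem_toFinset
  have hBFmem : ∀ x : G × G × G, x ∈ hBfin.toFinset ↔ x ∈ B := fun _ => hBfin.mem_toFinset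
  -- mutual inverse properties of the partner maps
  have hcWcB : ∀ x ∈ B, cW (x.1, cB x, x.2.2) = x.2.1 := by
    intro x hx
    exact (hcWu _ (hcB x hx).2 x.2.1 ⟨Ne.symm (hcB x hx).1, hx⟩).symm
  have hcBcW : ∀ t ∈ W, cB (t.1, cW t, t.2.2) = t.2.1 := by
    intro t ht
    exact (hcBu _ (hcW t ht).2 t.2.1 ⟨Ne.symm (hcW t ht).1, ht⟩).symm
  have hrWrB : ∀ x ∈ B, rW (rB x, x.2.1, x.2.2) = x.1 := by
    intro x hx
    exact (hrWu _ (hrB x hx).2 x.1 ⟨Ne.symm (hrB x hx).1, hx⟩).symm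
  have hrBrW : ∀ t ∈ W, rB (rW t, t.2.1, t.2.2) = t.1 := by
    intro t ht
    exact (hrBu _ (hrW t ht).2 t.1 ⟨Ne.symm (hrW t ht).1, ht⟩).symm
  have hsWsB : ∀ x ∈ B, sW (x.1, x.2.1, sB x) = x.2.2 := by
    intro x hx
    exact (hsWu _ (hsB x hx).2 x.2.2 ⟨Ne.symm (hsB x hx).1, hx⟩).symm
  have hsBsW : ∀ t ∈ W, sB (t.1, t.2.1, sW t) = t.2.2 := by
    intro t ht
    exact (hsBu _ (hsW t ht).2 t.2.2 ⟨Ne.symm (hsW t ht).1, ht⟩).symm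
  -- Lemma C : B-triples with maximal symbol value sit on maximal-level cells
  have keyC : ∀ b ∈ B, ψ b.2.2 = m → ψ b.1 + ψ b.2.1 = m := by
    intro b hb hbm
    have hsum : ∑ x ∈ hBfin.toFinset.filter (fun x => x.2.2 = b.2.2),
        (ψ x.2.2 - ψ x.1 - ψ x.2.1) = 0 := by
      have e1 : ∑ x ∈ hBfin.toFinset.filter (fun x => x.2.2 = b.2.2), ψ x.1
          = ∑ x ∈ hfin.toFinset.filter (fun x => x.2.2 = b.2.2), ψ x.1 := by
        refine Finset.sum_nbij' (fun x => (x.1, cB x, x.2.2)) (fun t => (t.1, cW t, t.2.2))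
          ?_ ?_ ?_ ?_ ?_
        · intro x hx
          rw [Finset.mem_filter] at hx ⊢
          exact ⟨(hWFmem _).2 (hcB x ((hBFmem x).1 hx.1)).2, hx.2⟩
        · intro t ht
          rw [Finset.mem_filter] at ht ⊢
          exact ⟨(hBFmem _).2 (hcW t ((hWFmem t).1 ht.1)).2, ht.2⟩
        · intro x hx
          rw [Finset.mem_filter] at hx
          have h' := hcWcB x ((hBFmem x).1 hx.1)
          show (x.1, cW (x.1, cB x, x.2.2), x.2.2) = x
          rw [h']
        · intro t ht
          rw [Finset.mem_filter] at ht
          have h' := hcBcW t ((hWFmem t).1 ht.1)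
          show (t.1, cB (t.1, cW t, t.2.2), t.2.2) = t
          rw [h']
        · intro x _; rfl
      have e2 : ∑ x ∈ hBfin.toFinset.filter (fun x => x.2.2 = b.2.2), ψ x.2.1
          = ∑ x ∈ hfin.toFinset.filter (fun x => x.2.2 = b.2.2), ψ x.2.1 := by
        refine Finset.sum_nbij' (fun x => (rB x, x.2.1, x.2.2)) (fun t => (rW t, t.2.1, t.2.2))
          ?_ ?_ ?_ ?_ ?_
        · intro x hx
          rw [Finset.mem_filter] at hx ⊢
          exact ⟨(hWFmem _).2 (hrB x ((hBFmem x).1 hx.1)).2, hx.2⟩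
        · intro t ht
          rw [Finset.mem_filter] at ht ⊢
          exact ⟨(hBFmem _).2 (hrW t ((hWFmem t).1 ht.1)).2, ht.2⟩
        · intro x hx
          rw [Finset.mem_filter] at hx
          have h' := hrWrB x ((hBFmem x).1 hx.1)
          show (rW (rB x, x.2.1, x.2.2), x.2.1, x.2.2) = x
          rw [h']
        · intro t ht
          rw [Finset.mem_filter] at ht
          have h' := hrBrW t ((hWFmem t).1 ht.1)
          show (rB (rW t, t.2.1, t.2.2), t.2.1, t.2.2) = t
          rw [h']
        · intro x _; rfl
      have e3 : ∑ x ∈ hBfin.toFinset.filter (fun x => x.2.2 = b.2.2), ψ x.2.2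
          = ∑ x ∈ hfin.toFinset.filter (fun x => x.2.2 = b.2.2), ψ x.2.2 := by
        refine Finset.sum_nbij' (fun x => (x.1, cB x, x.2.2)) (fun t => (t.1, cW t, t.2.2))
          ?_ ?_ ?_ ?_ ?_
        · intro x hx
          rw [Finset.mem_filter] at hx ⊢
          exact ⟨(hWFmem _).2 (hcB x ((hBFmem x).1 hx.1)).2, hx.2⟩
        · intro t ht
          rw [Finset.mem_filter] at ht ⊢
          exact ⟨(hBFmem _).2 (hcW t ((hWFmem t).1 ht.1)).2, ht.2⟩
        · intro x hx
          rw [Finset.mem_filter] at hx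
          have h' := hcWcB x ((hBFmem x).1 hx.1)
          show (x.1, cW (x.1, cB x, x.2.2), x.2.2) = x
          rw [h']
        · intro t ht
          rw [Finset.mem_filter] at ht
          have h' := hcBcW t ((hWFmem t).1 ht.1)
          show (t.1, cB (t.1, cW t, t.2.2), t.2.2) = t
          rw [h']
        · intro x _; rfl
      rw [Finset.sum_sub_distrib, Finset.sum_sub_distrib, e1, e2, e3,
        ← Finset.sum_sub_distrib, ← Finset.sum_sub_distrib]
      refine Finset.sum_eq_zero ?_
      intro x hx
      rw [Finset.mem_filter] at hx
      have := hlev x ((hWFmem x).1 hx.1)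
      omega
    have hnn : ∀ x ∈ hBfin.toFinset.filter (fun x => x.2.2 = b.2.2),
        0 ≤ ψ x.2.2 - ψ x.1 - ψ x.2.1 := by
      intro x hx
      rw [Finset.mem_filter] at hx
      have hx1 := (hBFmem x).1 hx.1
      have h1 := hlevB_le x hx1
      have h2 : ψ x.2.2 = m := by rw [hx.2]; exact hbm
      omega
    have hall := (Finset.sum_eq_zero_iff_of_nonneg hnn).1 hsum
    have hbmem : b ∈ hBfin.toFinset.filter (fun x => x.2.2 = b.2.2) := by
      rw [Finset.mem_filter]; exact ⟨(hBFmem b).2 hb, rfl⟩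
    have := hall b hbmem
    omega
  -- Lemma D : converse, by counting
  have keyD : ∀ b ∈ B, ψ b.1 + ψ b.2.1 = m → ψ b.2.2 = m := by
    intro b hb hbl
    have hc1 : (hBfin.toFinset.filter (fun x => ψ x.2.2 = m)).card
        = (hfin.toFinset.filter (fun x => ψ x.2.2 = m)).card := by
      refine Finset.card_nbij' (fun x => (x.1, cB x, x.2.2)) (fun t => (t.1, cW t, t.2.2))
        ?_ ?_ ?_ ?_
      · intro x hx
        rw [Finset.mem_coe, Finset.mem_filter] at hx ⊢
        exact ⟨(hWFmem _).2 (hcB x ((hBFmem x).1 hx.1)).2, hx.2⟩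
      · intro t ht
        rw [Finset.mem_coe, Finset.mem_filter] at ht ⊢
        exact ⟨(hBFmem _).2 (hcW t ((hWFmem t).1 ht.1)).2, ht.2⟩
      · intro x hx
        rw [Finset.mem_coe, Finset.mem_filter] at hx
        have h' := hcWcB x ((hBFmem x).1 hx.1)
        show (x.1, cW (x.1, cB x, x.2.2), x.2.2) = x
        rw [h']
      · intro t ht
        rw [Finset.mem_coe, Finset.mem_filter] at ht
        have h' := hcBcW t ((hWFmem t).1 ht.1)
        show (t.1, cB (t.1, cW t, t.2.2), t.2.2) = t
        rw [h']
    have hc2 : (hfin.toFinset.filter (fun x => ψ x.2.2 = m)).card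
        = (hBfin.toFinset.filter (fun x => ψ x.1 + ψ x.2.1 = m)).card := by
      refine Finset.card_nbij' (fun t => (t.1, t.2.1, sW t)) (fun x => (x.1, x.2.1, sB x))
        ?_ ?_ ?_ ?_
      · intro t ht
        rw [Finset.mem_coe, Finset.mem_filter] at ht ⊢
        have htW := (hWFmem t).1 ht.1
        refine ⟨(hBFmem _).2 (hsW t htW).2, ?_⟩
        show ψ t.1 + ψ t.2.1 = m
        rw [hlev t htW]; exact ht.2
      · intro x hx
        rw [Finset.mem_coe, Finset.mem_filter] at hx ⊢
        have hxB := (hBFmem x).1 hx.1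
        refine ⟨(hWFmem _).2 (hsB x hxB).2, ?_⟩
        show ψ (sB x) = m
        rw [← hlevB x hxB]; exact hx.2
      · intro t ht
        rw [Finset.mem_coe, Finset.mem_filter] at ht
        have h' := hsBsW t ((hWFmem t).1 ht.1)
        show (t.1, t.2.1, sB (t.1, t.2.1, sW t)) = t
        rw [h']
      · intro x hx
        rw [Finset.mem_coe, Finset.mem_filter] at hx
        have h' := hsWsB x ((hBFmem x).1 hx.1)
        show (x.1, x.2.1, sW (x.1, x.2.1, sB x)) = x
        rw [h']
    have hsub : hBfin.toFinset.filter (fun x => ψ x.2.2 = m)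
        ⊆ hBfin.toFinset.filter (fun x => ψ x.1 + ψ x.2.1 = m) := by
      intro x hx
      rw [Finset.mem_filter] at hx ⊢
      exact ⟨hx.1, keyC x ((hBFmem x).1 hx.1) hx.2⟩
    have heqf : hBfin.toFinset.filter (fun x => ψ x.2.2 = m)
        = hBfin.toFinset.filter (fun x => ψ x.1 + ψ x.2.1 = m) :=
      Finset.eq_of_subset_of_card_le hsub (by omega)
    have hbmem : b ∈ hBfin.toFinset.filter (fun x => ψ x.1 + ψ x.2.1 = m) := by
      rw [Finset.mem_filter]; exact ⟨(hBFmem b).2 hb, hbl⟩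
    rw [← heqf, Finset.mem_filter] at hbmem
    exact hbmem.2
  -- First splitting: all symbols have value m
  obtain ⟨hWm, hBm⟩ := splitClosed h hconn {τ : G × G × G | ψ τ.2.2 = m}
    (by
      intro t ht htm y hy hs
      simp only [Set.mem_setOf_eq] at htm ⊢
      rcases hs with ⟨e1, e2⟩ | ⟨e1, e3⟩ | ⟨e2, e3⟩
      · refine keyD y hy ?_
        have hl := hlev t ht
        rw [← e1, ← e2]
        omega
      · rw [← e3]; exact htm
      · rw [← e3]; exact htm)
    (by
      intro t ht htm y hy hs
      simp only [Set.mem_setOf_eq] at htm ⊢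
      rcases hs with ⟨e1, e2⟩ | ⟨e1, e3⟩ | ⟨e2, e3⟩
      · have hl := keyC t ht htm
        have hly := hlev y hy
        rw [← e1, ← e2] at hly
        omega
      · rw [← e3]; exact htm
      · rw [← e3]; exact htm)
    (by
      obtain ⟨t, ht, htm⟩ := hmEx
      exact ⟨t, ht, htm⟩)
  simp only [Set.mem_setOf_eq] at hWm hBm
  have hlevWm : ∀ t ∈ W, ψ t.1 + ψ t.2.1 = m := by
    intro t ht
    have := hlev t ht
    have := hWm t ht
    omega
  have hlevBm : ∀ b ∈ B, ψ b.1 + ψ b.2.1 = m := fun b hb => keyC b hb (hBm b hb)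
  -- Second splitting: rows and columns constant
  obtain ⟨t₀, ht₀⟩ := hWne
  have hcl2 : ∀ t, (t ∈ W ∨ t ∈ B) →
      t ∈ {τ : G × G × G | ψ τ.1 = ψ t₀.1 ∧ ψ τ.2.1 = m - ψ t₀.1} → ∀ y, (y ∈ W ∨ y ∈ B) →
      Share2 t y → y ∈ {τ : G × G × G | ψ τ.1 = ψ t₀.1 ∧ ψ τ.2.1 = m - ψ t₀.1} := by
    intro t _ htm y hy hs
    have hylev : ψ y.1 + ψ y.2.1 = m := by
      rcases hy with hy | hy
      exacts [hlevWm y hy, hlevBm y hy]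
    simp only [Set.mem_setOf_eq] at htm ⊢
    obtain ⟨ha1, ha2⟩ := htm
    rcases hs with ⟨e1, e2⟩ | ⟨e1, e3⟩ | ⟨e2, e3⟩
    · exact ⟨by rw [← e1]; exact ha1, by rw [← e2]; exact ha2⟩
    · have h' : ψ y.1 = ψ t₀.1 := by rw [← e1]; exact ha1
      exact ⟨h', by omega⟩
    · have h' : ψ y.2.1 = m - ψ t₀.1 := by rw [← e2]; exact ha2
      exact ⟨by omega, h'⟩
  obtain ⟨hWa, hBa⟩ := splitClosed h hconn
    {τ : G × G × G | ψ τ.1 = ψ t₀.1 ∧ ψ τ.2.1 = m - ψ t₀.1}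
    (fun t ht htm y hy hs => hcl2 t (Or.inl ht) htm y (Or.inr hy) hs)
    (fun t ht htm y hy hs => hcl2 t (Or.inr ht) htm y (Or.inl hy) hs)
    ⟨t₀, ht₀, ⟨rfl, by have := hlevWm t₀ ht₀; omega⟩⟩
  simp only [Set.mem_setOf_eq] at hWa
  -- constants on rows, columns, symbols of W
  have hrowc : ∀ x : G, (∃ y z, (x, y, z) ∈ W) → ψ x = ψ t₀.1 := by
    rintro x ⟨y, z, hx⟩
    exact (hWa _ hx).1
  have hcolc : ∀ y : G, (∃ x z, (x, y, z) ∈ W) → ψ y = m - ψ t₀.1 := by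
    rintro y ⟨x, z, hx⟩
    exact (hWa _ hx).2
  have hsymc : ∀ z : G, (∃ x y, (x, y, z) ∈ W) → ψ z = m := by
    rintro z ⟨x, y, hx⟩
    exact hWm _ hx
  have ht₀c : ψ t₀.2.1 = m - ψ t₀.1 := (hWa t₀ ht₀).2
  have ht₀s : ψ t₀.2.2 = m := hWm t₀ ht₀
  -- kernel membership helper
  have hψinv : ∀ x : G, ψ x⁻¹ = -ψ x := by
    intro x; simp [hψdef]
  have hker0 : ∀ x : G, ψ x = 0 → x ∈ φ.ker := by
    intro x hx
    rw [MonoidHom.mem_ker]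
    have hx' : Multiplicative.toAdd (φ x) = 0 := hx
    rwa [toAdd_eq_zero] at hx'
  -- kernel membership of the translated elements
  have hkf : ∀ x : G, (∃ y z, (x, y, z) ∈ W) → t₀.2.2⁻¹ * x * t₀.2.1 ∈ φ.ker := by
    intro x hx
    refine hker0 _ ?_
    have e1 := hψ (t₀.2.2⁻¹ * x) t₀.2.1
    have e2 := hψ t₀.2.2⁻¹ x
    have e3 := hψinv t₀.2.2
    have e4 := hrowc x hx
    omega
  have hkg : ∀ y : G, (∃ x z, (x, y, z) ∈ W) → t₀.2.1⁻¹ * y ∈ φ.ker := by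
    intro y hy
    refine hker0 _ ?_
    have e1 := hψ t₀.2.1⁻¹ y
    have e2 := hψinv t₀.2.1
    have e3 := hcolc y hy
    omega
  have hkh : ∀ z : G, (∃ x y, (x, y, z) ∈ W) → t₀.2.2⁻¹ * z ∈ φ.ker := by
    intro z hz
    refine hker0 _ ?_
    have e1 := hψ t₀.2.2⁻¹ z
    have e2 := hψinv t₀.2.2
    have e3 := hsymc z hz
    omega
  refine ⟨fun x => if hx : ∃ y z, (x, y, z) ∈ W then ⟨t₀.2.2⁻¹ * x * t₀.2.1, hkf x hx⟩ else 1,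
    fun y => if hy : ∃ x z, (x, y, z) ∈ W then ⟨t₀.2.1⁻¹ * y, hkg y hy⟩ else 1,
    fun z => if hz : ∃ x y, (x, y, z) ∈ W then ⟨t₀.2.2⁻¹ * z, hkh z hz⟩ else 1,
    ?_, ?_, ?_, ?_⟩
  · intro x₁ hx₁ x₂ hx₂ heq
    simp only [Set.mem_setOf_eq] at hx₁ hx₂
    simp only [dif_pos hx₁, dif_pos hx₂] at heq
    have h' : t₀.2.2⁻¹ * x₁ * t₀.2.1 = t₀.2.2⁻¹ * x₂ * t₀.2.1 := congrArg Subtype.val heq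
    have h'' := mul_right_cancel h'
    exact mul_left_cancel h''
  · intro y₁ hy₁ y₂ hy₂ heq
    simp only [Set.mem_setOf_eq] at hy₁ hy₂
    simp only [dif_pos hy₁, dif_pos hy₂] at heq
    have h' : t₀.2.1⁻¹ * y₁ = t₀.2.1⁻¹ * y₂ := congrArg Subtype.val heq
    exact mul_left_cancel h'
  · intro z₁ hz₁ z₂ hz₂ heq
    simp only [Set.mem_setOf_eq] at hz₁ hz₂
    simp only [dif_pos hz₁, dif_pos hz₂] at heq
    have h' : t₀.2.2⁻¹ * z₁ = t₀.2.2⁻¹ * z₂ := congrArg Subtype.val heq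
    exact mul_left_cancel h'
  · intro t ht
    have hx : ∃ y z, (t.1, y, z) ∈ W := ⟨t.2.1, t.2.2, ht⟩
    have hy : ∃ x z, (x, t.2.1, z) ∈ W := ⟨t.1, t.2.2, ht⟩
    have hz : ∃ x y, (x, y, t.2.2) ∈ W := ⟨t.1, t.2.1, ht⟩
    simp only [dif_pos hx, dif_pos hy, dif_pos hz]
    apply Subtype.ext
    show (t₀.2.2⁻¹ * t.1 * t₀.2.1) * (t₀.2.1⁻¹ * t.2.1) = t₀.2.2⁻¹ * t.2.2
    rw [← hemb t ht]
    group
end
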